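/- Let (x₁, x₂, …, x_p) be a finite block basis of the unit vector basis of c₀₀ with ‖x_k‖_{T̃} = 1 for each k, and let i_k = max supp x_k. Then for all scalars (a_k), ‖Σ_{k=1}^p a_k x_k‖_{T̃} ≤ 2 ‖Σ_{k=1}^p a_k e_{i_k}‖_{T̈}, where (e_n) denotes the unit vector basis. (In particular, this inequality holds at every finite level: ‖Σ_{k=1}^p a_k x_k‖_n ≤ 2 ‖Σ_{k=1}^p a_k e_{i_k}‖′_n for all n ≥ 0.) -/

import Mathlib

open Ordinal Filter Topology

namespace LTIndex

/-- `E < F` for finite sets: `max E < min F` (with `max ∅ = 0`, `min ∅ = ∞`),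
equivalently every element of `E` is less than every element of `F`. -/
def finLT (E F : Finset ℕ) : Prop := ∀ a ∈ E, ∀ b ∈ F, a < b

/-- `min E` (junk value `0` when `E = ∅`). -/
noncomputable def minOf (E : Finset ℕ) : ℕ := sInf (E : Set ℕ)

/-- `{E₁, …, E_n}` is `𝓕`-admissible: the `Eᵢ` are nonempty, `E₁ < ⋯ < E_n`
and `{min E₁, …, min E_n} ∈ 𝓕`. -/
def IsAdmissible (𝓕 : Set (Finset ℕ)) (l : List (Finset ℕ)) : Prop :=
  (∀ E ∈ l, E.Nonempty) ∧ l.Chain' finLT ∧ (l.map minOf).toFinset ∈ 𝓕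

/-- `𝓜[𝓝]`. -/
def famComp (M N : Set (Finset ℕ)) : Set (Finset ℕ) :=
  {F | ∃ l : List (Finset ℕ), IsAdmissible M l ∧ (∀ E ∈ l, E ∈ N) ∧
    F = l.foldr (· ∪ ·) ∅}

/-- `(𝓜, 𝓝) = {M ∪ N : M < N, M ∈ 𝓜, N ∈ 𝓝}`. -/
def pairFam (M N : Set (Finset ℕ)) : Set (Finset ℕ) :=
  {F | ∃ A ∈ M, ∃ B ∈ N, finLT A B ∧ F = A ∪ B}

/-- `𝓜² = (𝓜, 𝓜)`. -/
def sqFam (M : Set (Finset ℕ)) : Set (Finset ℕ) := pairFam M M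

/-- `S₀ = {{n} : n ∈ ℕ} ∪ {∅}`. -/
def schreierZero : Set (Finset ℕ) := {F : Finset ℕ | F.card ≤ 1}

/-- `S₁ = {F : |F| ≤ min F}`. -/
noncomputable def schreierOne : Set (Finset ℕ) := {F : Finset ℕ | F.card ≤ minOf F}

/-- A ladder system: for every countable limit ordinal `o`, `seq o` is a strictly
increasing sequence of ordinals below `o` with supremum `o`. -/
def IsCtblLadder (seq : Ordinal.{0} → ℕ → Ordinal.{0}) : Prop :=
  ∀ o : Ordinal, o.card ≤ Cardinal.aleph0 → (o ≠ 0 ∧ ∀ a < o, Order.succ a < o) →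
    StrictMono (seq o) ∧ (∀ n : ℕ, seq o n < o) ∧ (⨆ n : ℕ, seq o n) = o

/-- The Schreier classes `S_α`, relative to a choice `seq` of ladders at limit
ordinals: `S₀` is the singletons together with `∅`, `S_{α+1} = S₁[S_α]`, and at a
limit `α` (with ladder `(α_n) = seq α`), `S_α = {F : F ∈ S_{α_n} for some n ≤ |F|}`. -/
noncomputable def schreier (seq : Ordinal.{0} → ℕ → Ordinal.{0}) (o : Ordinal.{0}) :
    Set (Finset ℕ) :=
  Ordinal.limitRecOn (motive := fun _ => Set (Finset ℕ)) o schreierZero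
    (fun _ S => famComp schreierOne S)
    (fun o _ ih => {F | ∃ n : ℕ, n ≤ F.card ∧ ∃ h : seq o n < o, F ∈ ih (seq o n) h})

/-! ### Section A : basics -/

lemma minOf_mem {E : Finset ℕ} (h : E.Nonempty) : minOf E ∈ E := by
  have : (E : Set ℕ).Nonempty := by exact_mod_cast h
  exact_mod_cast Nat.sInf_mem this

lemma minOf_le {E : Finset ℕ} {a : ℕ} (h : a ∈ E) : minOf E ≤ a :=
  Nat.sInf_le (by exact_mod_cast h)

lemma minOf_empty : minOf (∅ : Finset ℕ) = 0 := by
  simp [minOf, Nat.sInf_empty]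

lemma one_le_minOf {E : Finset ℕ} (hne : E.Nonempty) (h0 : 0 ∉ E) : 1 ≤ minOf E := by
  rcases Nat.eq_zero_or_pos (minOf E) with h | h
  · exact absurd (h ▸ minOf_mem hne) h0
  · exact h

lemma empty_mem_schreierOne : (∅ : Finset ℕ) ∈ schreierOne := by
  simp [schreierOne]

lemma singleton_mem_schreierOne {a : ℕ} (h : 1 ≤ a) : ({a} : Finset ℕ) ∈ schreierOne := by
  simpa [schreierOne, minOf] using h

lemma schreierOne_hereditary {A B : Finset ℕ} (hA : A ∈ schreierOne) (hBA : B ⊆ A) :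
    B ∈ schreierOne := by
  rcases B.eq_empty_or_nonempty with rfl | hne
  · exact empty_mem_schreierOne
  · have h1 : B.card ≤ A.card := Finset.card_le_card hBA
    have h2 : minOf A ≤ minOf B := minOf_le (hBA (minOf_mem hne))
    exact le_trans h1 (le_trans hA h2)

lemma mem_foldr_union {l : List (Finset ℕ)} {a : ℕ} :
    a ∈ l.foldr (· ∪ ·) ∅ ↔ ∃ E ∈ l, a ∈ E := by
  induction l with
  | nil => simp
  | cons E l ih => simp [Finset.mem_union, ih]

lemma chain'_pairwise : ∀ {l : List (Finset ℕ)}, (∀ E ∈ l, E.Nonempty) →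
    l.Chain' finLT → l.Pairwise finLT := by
  intro l
  induction l with
  | nil => intro _ _; simp
  | cons E l ih =>
    intro hne hc
    have hct : l.Chain' finLT := hc.tail
    have hp : l.Pairwise finLT := ih (fun F hF => hne F (List.mem_cons_of_mem _ hF)) hct
    refine List.Pairwise.cons ?_ hp
    intro G hG
    cases l with
    | nil => cases hG
    | cons F₀ rest =>
      have hEF₀ : finLT E F₀ := (List.isChain_cons_cons.mp hc).1
      rcases List.mem_cons.mp hG with rfl | hG'
      · exact hEF₀
      · have hF₀F : finLT F₀ G := (List.pairwise_cons.mp hp).1 G hG'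
        intro a ha b hb
        obtain ⟨c, hc0⟩ := hne F₀ (by simp)
        exact lt_trans (hEF₀ a ha c hc0) (hF₀F c hc0 b hb)

lemma pairwise_mem_cases {α : Type*} {R : α → α → Prop} :
    ∀ {l : List α}, l.Pairwise R → ∀ {a b : α}, a ∈ l → b ∈ l →
      a = b ∨ R a b ∨ R b a := by
  intro l
  induction l with
  | nil => intro _ a b ha; cases ha
  | cons c l ih =>
    intro h a b ha hb
    rcases List.mem_cons.mp ha with rfl | ha'
    · rcases List.mem_cons.mp hb with rfl | hb'
      · exact Or.inl rfl
      · exact Or.inr (Or.inl ((List.pairwise_cons.mp h).1 b hb'))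
    · rcases List.mem_cons.mp hb with rfl | hb'
      · exact Or.inr (Or.inr ((List.pairwise_cons.mp h).1 a ha'))
      · exact ih (List.pairwise_cons.mp h).2 ha' hb'

lemma finLT_disjoint {E F : Finset ℕ} (h : finLT E F) : Disjoint E F := by
  rw [Finset.disjoint_left]
  intro a ha ha'
  exact lt_irrefl a (h a ha a ha')

/-- mins of an admissible-style list are strictly increasing along positions -/
lemma minOf_lt_of_pairwise {l : List (Finset ℕ)} (hne : ∀ E ∈ l, E.Nonempty)
    (hp : l.Pairwise finLT) {E F : Finset ℕ} (hE : E ∈ l) (hF : F ∈ l)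
    (hEF : finLT E F) : minOf E < minOf F := by
  obtain ⟨a, ha⟩ := hne E hE
  exact lt_of_le_of_lt (minOf_le ha) (hEF a ha _ (minOf_mem (hne F hF)))

/-! ### Schreier unfolding -/

section SchreierSec

variable {seq : Ordinal.{0} → ℕ → Ordinal.{0}}

lemma schreier_zero : schreier seq 0 = schreierZero := by
  rw [schreier, Ordinal.limitRecOn_zero]

lemma schreier_succ (o : Ordinal.{0}) :
    schreier seq (o + 1) = famComp schreierOne (schreier seq o) := by
  rw [schreier, Ordinal.limitRecOn_add_one]
  rfl

lemma schreier_limit {o : Ordinal.{0}} (ho : Order.IsSuccLimit o) :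
    schreier seq o =
      {F | ∃ n : ℕ, n ≤ F.card ∧ ∃ _ : seq o n < o, F ∈ schreier seq (seq o n)} := by
  rw [schreier, Ordinal.limitRecOn_limit _ _ _ _ ho]
  rfl

lemma isLim_cond {o : Ordinal.{0}} (ho : Order.IsSuccLimit o) :
    o ≠ 0 ∧ ∀ a < o, Order.succ a < o :=
  ⟨(Ordinal.isSuccLimit_iff.mp ho).1, fun _ ha => ho.succ_lt ha⟩

lemma card_le_aleph0_of_lt {o o' : Ordinal.{0}} (h : o' < o)
    (ho : o.card ≤ Cardinal.aleph0) : o'.card ≤ Cardinal.aleph0 :=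
  le_trans (Ordinal.card_le_card h.le) ho

lemma nat_le_strictMono {f : ℕ → Ordinal.{0}} (hf : StrictMono f) (n : ℕ) :
    (n : Ordinal) ≤ f n := by
  induction n with
  | zero => simp
  | succ n ih =>
    have h1 : f n < f (n + 1) := hf (Nat.lt_succ_self n)
    have := lt_of_le_of_lt ih h1
    rw [Nat.cast_succ]
    rwa [← Order.add_one_le_iff] at this

variable (hseq : IsCtblLadder seq)
include hseq

lemma empty_mem_schreier : ∀ {o : Ordinal.{0}}, o.card ≤ Cardinal.aleph0 →
    (∅ : Finset ℕ) ∈ schreier seq o := by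
  intro o
  induction o using Ordinal.limitRecOn with
  | zero => intro _; rw [schreier_zero]; simp [schreierZero]
  | add_one o ih =>
    rw [Ordinal.add_one_eq_succ]
    intro hc
    rw [← Ordinal.add_one_eq_succ, schreier_succ]
    refine ⟨[], ⟨by simp, List.isChain_nil, by simpa using empty_mem_schreierOne⟩, by simp, by simp⟩
  | limit o ho ih =>
    intro hc
    rw [schreier_limit ho]
    obtain ⟨hmono, hlt, _⟩ := hseq o hc (isLim_cond ho)
    exact ⟨0, by simp, hlt 0, ih _ (hlt 0) (card_le_aleph0_of_lt (hlt 0) hc)⟩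

/-- If `0 ∈ F ∈ S_o` then `F = {0}`. -/
lemma zero_mem_schreier : ∀ {o : Ordinal.{0}} {F : Finset ℕ},
    F ∈ schreier seq o → 0 ∈ F → F = {0} := by
  intro o
  induction o using Ordinal.limitRecOn with
  | zero =>
    intro F hF h0
    rw [schreier_zero] at hF
    rw [Finset.eq_singleton_iff_unique_mem]
    refine ⟨h0, fun x hx => ?_⟩
    by_contra hne
    have : ({0, x} : Finset ℕ) ⊆ F := by
      intro y hy; rcases Finset.mem_insert.mp hy with rfl | hy
      · exact h0
      · rwa [Finset.mem_singleton.mp hy]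
    have h2 : ({0, x} : Finset ℕ).card = 2 := by
      rw [Finset.card_insert_of_notMem (by simpa using Ne.symm hne)]; rfl
    have := Finset.card_le_card this
    rw [h2] at this
    exact absurd (le_trans this hF) (by norm_num)
  | add_one o ih =>
    rw [Ordinal.add_one_eq_succ]
    intro F hF h0
    rw [← Ordinal.add_one_eq_succ, schreier_succ] at hF
    obtain ⟨l, ⟨hne, hch, hmins⟩, hmem, rfl⟩ := hF
    obtain ⟨E, hEl, hE0⟩ := mem_foldr_union.mp h0
    exfalso
    have hminE : minOf E = 0 := Nat.le_zero.mp (minOf_le hE0)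
    have hminmem : (0 : ℕ) ∈ (l.map minOf).toFinset := by
      rw [List.mem_toFinset]
      exact hminE ▸ List.mem_map_of_mem hEl
    have hmin0 : minOf ((l.map minOf).toFinset) = 0 := Nat.le_zero.mp (minOf_le hminmem)
    have hcard : ((l.map minOf).toFinset).card = 0 := by
      have := hmins
      rw [schreierOne, Set.mem_setOf_eq, hmin0] at this
      omega
    rw [Finset.card_eq_zero] at hcard
    rw [hcard] at hminmem
    exact absurd hminmem (Finset.notMem_empty _)
  | limit o ho ih =>
    intro F hF h0
    rw [schreier_limit ho] at hF
    obtain ⟨n, _, hlt, hF⟩ := hF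
    exact ih _ hlt hF h0

/-- `F ∈ S_o`, `0 ∉ F` implies `F ∈ S_{o+1}`. -/
lemma step_up {o : Ordinal.{0}} {F : Finset ℕ} (hF : F ∈ schreier seq o) (h0 : 0 ∉ F) :
    F ∈ schreier seq (o + 1) := by
  rw [schreier_succ]
  rcases F.eq_empty_or_nonempty with rfl | hne
  · exact ⟨[], ⟨by simp, List.isChain_nil, by simpa using empty_mem_schreierOne⟩, by simp, by simp⟩
  · refine ⟨[F], ⟨by simpa using hne, List.isChain_singleton _, ?_⟩, by simpa using hF, by simp⟩
    simp only [List.map_cons, List.map_nil, List.toFinset_cons, List.toFinset_nil,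
      LawfulSingleton.insert_empty_eq]
    exact singleton_mem_schreierOne (one_le_minOf hne h0)

/-! ### Section B : lifting lemmas -/

omit hseq in
lemma nodup_of_pairwise_finLT {l : List (Finset ℕ)} (hne : ∀ E ∈ l, E.Nonempty)
    (hp : l.Pairwise finLT) : l.Nodup := by
  refine hp.imp_of_mem ?_
  intro E F hE _ h
  intro hEF
  obtain ⟨a, ha⟩ := hne E hE
  exact lt_irrefl a (h a ha a (hEF ▸ ha))

lemma mem_mono : ∀ {o : Ordinal.{0}}, o.card ≤ Cardinal.aleph0 →
    ∀ {F : Finset ℕ}, F ∈ schreier seq (F.card : Ordinal) → 0 ∉ F →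
      (F.card : Ordinal) ≤ o → F ∈ schreier seq o := by
  intro o
  induction o using Ordinal.limitRecOn with
  | zero =>
    intro _ F hF _ hle
    have : F.card = 0 := by exact_mod_cast nonpos_iff_eq_zero.mp hle
    rw [this] at hF
    simpa using hF
  | add_one o ih =>
    rw [Ordinal.add_one_eq_succ]
    intro hco F hF h0 hle
    rcases le_or_gt ((F.card : ℕ) : Ordinal) o with h | h
    · have h1 : F ∈ schreier seq o :=
        ih (le_trans (Ordinal.card_le_card (Order.le_succ o)) hco) hF h0 h
      have := step_up hseq h1 h0
      rwa [Ordinal.add_one_eq_succ] at this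
    · have h2 : Order.succ o ≤ (F.card : Ordinal) := Order.succ_le_of_lt h
      have h3 : ((F.card : ℕ) : Ordinal) = Order.succ o := le_antisymm hle h2
      rwa [h3] at hF
  | limit o ho ih =>
    intro hco F hF h0 _
    obtain ⟨hmono, hlt, _⟩ := hseq o hco (isLim_cond ho)
    have h1 : seq o F.card < o := hlt F.card
    have h2 : ((F.card : ℕ) : Ordinal) ≤ seq o F.card := nat_le_strictMono hmono F.card
    have h3 : F ∈ schreier seq (seq o F.card) :=
      ih _ h1 (card_le_aleph0_of_lt h1 hco) hF h0 h2
    rw [schreier_limit ho]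
    exact ⟨F.card, le_refl _, h1, h3⟩

lemma mem_card : ∀ {o : Ordinal.{0}}, ∀ {F : Finset ℕ}, F ∈ schreier seq o →
    F.Nonempty → 0 ∉ F → F ∈ schreier seq (F.card : Ordinal) := by
  intro o
  induction o using Ordinal.limitRecOn with
  | zero =>
    intro F hF hne h0
    rw [schreier_zero] at hF
    have hc1 : F.card = 1 := le_antisymm hF (Finset.card_pos.mpr hne)
    rw [hc1]
    have : ((1 : ℕ) : Ordinal) = 0 + 1 := by simp
    rw [this, schreier_succ]
    refine ⟨[F], ⟨by simpa using hne, List.isChain_singleton _, ?_⟩, ?_, by simp⟩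
    · simp only [List.map_cons, List.map_nil, List.toFinset_cons, List.toFinset_nil,
        LawfulSingleton.insert_empty_eq]
      exact singleton_mem_schreierOne (one_le_minOf hne h0)
    · intro E hE
      rw [List.mem_singleton] at hE
      subst hE
      rw [schreier_zero]
      exact le_of_eq hc1
  | add_one o ih =>
    rw [Ordinal.add_one_eq_succ]
    intro F hF hne h0
    rw [← Ordinal.add_one_eq_succ, schreier_succ] at hF
    obtain ⟨l, hadm, hmem, rfl⟩ := hF
    obtain ⟨hlne, hch, hmins⟩ := hadm
    have hp : l.Pairwise finLT := chain'_pairwise hlne hch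
    have hsub : ∀ E ∈ l, E ⊆ l.foldr (· ∪ ·) ∅ := by
      intro E hE a ha
      exact mem_foldr_union.mpr ⟨E, hE, ha⟩
    match l, hp, hlne, hch, hmins, hmem, hsub, hne with
    | [], _, _, _, _, _, _, hne => simp at hne
    | [E], _, hlne, _, hmins, hmem, _, hne =>
      have hFE : List.foldr (· ∪ ·) ∅ [E] = E := by simp
      rw [hFE] at hne h0 ⊢
      exact ih (hmem E (by simp)) hne h0
    | E₀ :: E₁ :: rest, hp, hlne, hch, hmins, hmem, hsub, hne =>
      set l : List (Finset ℕ) := E₀ :: E₁ :: rest with hl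
      set F : Finset ℕ := l.foldr (· ∪ ·) ∅ with hF
      set c : ℕ := F.card with hc
      -- each entry has card + 1 ≤ c
      have hcard1 : ∀ E ∈ l, E.card + 1 ≤ c := by
        intro E hE
        have hnd : l.Nodup := nodup_of_pairwise_finLT hlne hp
        have h2 : 1 < l.toFinset.card := by
          rw [List.toFinset_card_of_nodup hnd]
          simp [hl]
        obtain ⟨E', hE', hEE'⟩ := Finset.exists_mem_ne h2 E
        rw [List.mem_toFinset] at hE'
        have hdisj : Disjoint E' E := by
          rcases pairwise_mem_cases hp hE' hE with h | h | h
          · exact absurd h hEE'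
          · exact finLT_disjoint h
          · exact (finLT_disjoint h).symm
        obtain ⟨a, ha⟩ := hlne E' hE'
        have hanot : a ∉ E := Finset.disjoint_left.mp hdisj ha
        have hins : insert a E ⊆ F := by
          intro b hb
          rcases Finset.mem_insert.mp hb with rfl | hb
          · exact hsub E' hE' ha
          · exact hsub E hE hb
        have := Finset.card_le_card hins
        rwa [Finset.card_insert_of_notMem hanot] at this
      have hc2 : 2 ≤ c := by
        have h1 : (E₀ : Finset ℕ).card + 1 ≤ c := hcard1 E₀ (by simp [hl])
        have h2 : 1 ≤ E₀.card := Finset.card_pos.mpr (hlne E₀ (by simp [hl]))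
        omega
      -- lift each entry into S_{c-1}
      have hent : ∀ E ∈ l, E ∈ schreier seq ((c - 1 : ℕ) : Ordinal) := by
        intro E hE
        have h0E : 0 ∉ E := fun h => h0 (hsub E hE h)
        have hEcard : E ∈ schreier seq (E.card : Ordinal) :=
          ih (hmem E hE) (hlne E hE) h0E
        refine mem_mono hseq (by rw [Ordinal.card_nat]; exact (Cardinal.nat_lt_aleph0 _).le) hEcard h0E ?_
        have := hcard1 E hE
        exact_mod_cast Nat.cast_le.mpr (by omega : E.card ≤ c - 1)
      have hcast : ((c : ℕ) : Ordinal) = ((c - 1 : ℕ) : Ordinal) + 1 := by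
        rw [← Nat.cast_succ]
        exact_mod_cast (by omega : c = c - 1 + 1)
      rw [hcast, schreier_succ]
      exact ⟨l, ⟨hlne, hch, hmins⟩, hent, rfl⟩
  | limit o ho ih =>
    intro F hF hne h0
    rw [schreier_limit ho] at hF
    obtain ⟨n, _, hlt, hF⟩ := hF
    exact ih _ hlt hF hne h0

lemma mem_lift {o : Ordinal.{0}} {F : Finset ℕ} (hF : F ∈ schreier seq o) (h0 : 0 ∉ F)
    {o' : Ordinal.{0}} (hcard : (F.card : Ordinal) ≤ o') (ho' : o'.card ≤ Cardinal.aleph0) :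
    F ∈ schreier seq o' := by
  rcases F.eq_empty_or_nonempty with rfl | hne
  · exact empty_mem_schreier hseq ho'
  · exact mem_mono hseq ho' (mem_card hseq hF hne h0) h0 hcard

lemma lift_into_limit {o : Ordinal.{0}} (ho : Order.IsSuccLimit o) (hoc : o.card ≤ Cardinal.aleph0)
    {F : Finset ℕ} {n : ℕ} (hF : F ∈ schreier seq (seq o n))
    (h : n ≤ F.card ∨ 0 ∉ F) : F ∈ schreier seq o := by
  obtain ⟨hmono, hlt, _⟩ := hseq o hoc (isLim_cond ho)
  rcases h with h | h0
  · rw [schreier_limit ho]; exact ⟨n, h, hlt n, hF⟩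
  · have h3 : F ∈ schreier seq (seq o F.card) :=
      mem_lift hseq hF h0 (nat_le_strictMono hmono F.card)
        (card_le_aleph0_of_lt (hlt _) hoc)
    rw [schreier_limit ho]
    exact ⟨F.card, le_refl _, hlt _, h3⟩

/-! ### Section C : splitting lemmas -/

omit hseq in
lemma card_le_of_fibers {V M : Finset ℕ} (ψ : ℕ → ℕ) (r : ℕ)
    (hmem : ∀ v ∈ V, ψ v ∈ M)
    (hfib : ∀ μ, (V.filter (fun v => ψ v = μ)).card ≤ r) : V.card ≤ r * M.card := by
  classical
  have hsub : V ⊆ M.biUnion (fun μ => V.filter (fun v => ψ v = μ)) := by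
    intro v hv
    exact Finset.mem_biUnion.mpr ⟨ψ v, hmem v hv, Finset.mem_filter.mpr ⟨hv, rfl⟩⟩
  calc V.card ≤ (M.biUnion (fun μ => V.filter (fun v => ψ v = μ))).card :=
        Finset.card_le_card hsub
    _ ≤ ∑ μ ∈ M, (V.filter (fun v => ψ v = μ)).card := Finset.card_biUnion_le
    _ ≤ ∑ _μ ∈ M, r := Finset.sum_le_sum (fun μ _ => hfib μ)
    _ = M.card * r := by rw [Finset.sum_const]; exact _root_.smul_eq_mul _ _
    _ = r * M.card := mul_comm _ _

omit hseq in
lemma sq1 {N W : Finset ℕ} (hN : N ∈ schreierOne) (ψ : ℕ → ℕ)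
    (hmem : ∀ w ∈ W, ψ w ∈ N) (hle : ∀ w ∈ W, ψ w ≤ w)
    (hmono : ∀ v ∈ W, ∀ w ∈ W, v ≤ w → ψ v ≤ ψ w)
    (hfib : ∀ μ, (W.filter (fun v => ψ v = μ)).card ≤ 2) :
    ∃ θ : ℕ, W.filter (fun v => v < θ) ∈ schreierOne ∧
      W.filter (fun v => ¬ v < θ) ∈ schreierOne := by
  classical
  set m := N.card with hm
  have hrank_mono : ∀ v ∈ W, ∀ w ∈ W, v < w →
      (W.filter (fun u => u < v)).card < (W.filter (fun u => u < w)).card := by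
    intro v hv w hw hvw
    apply Finset.card_lt_card
    constructor
    · intro u hu
      rw [Finset.mem_filter] at hu ⊢
      exact ⟨hu.1, lt_trans hu.2 hvw⟩
    · intro hcon
      have : v ∈ W.filter (fun u => u < v) := hcon (Finset.mem_filter.mpr ⟨hv, hvw⟩)
      exact lt_irrefl v (Finset.mem_filter.mp this).2
  have hminNle : ∀ w ∈ W, m ≤ w := by
    intro w hw
    have h1 : m ≤ minOf N := hN
    exact le_trans h1 (le_trans (minOf_le (hmem w hw)) (hle w hw))
  set B0 := W.filter (fun w => m ≤ (W.filter (fun u => u < w)).card) with hB0def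
  by_cases hB0 : B0.Nonempty
  · -- split at b₀ = min B0
    set b₀ := B0.min' hB0 with hb₀
    have hb₀W : b₀ ∈ W := (Finset.mem_filter.mp (B0.min'_mem hB0)).1
    have hb₀rank : m ≤ (W.filter (fun u => u < b₀)).card :=
      (Finset.mem_filter.mp (B0.min'_mem hB0)).2
    refine ⟨b₀, ?_, ?_⟩
    · -- lower part
      set A := W.filter (fun v => v < b₀) with hA
      rcases A.eq_empty_or_nonempty with hAe | hAne
      · rw [hAe]; exact empty_mem_schreierOne
      · have hcardA : A.card ≤ m := by
          have hinj : ∀ a ∈ A, (W.filter (fun u => u < a)).card ∈ Finset.range m := by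
            intro a ha
            rw [Finset.mem_range]
            rw [hA, Finset.mem_filter] at ha
            by_contra hcon
            push_neg at hcon
            have : a ∈ B0 := Finset.mem_filter.mpr ⟨ha.1, hcon⟩
            exact absurd (B0.min'_le a this) (by omega)
          have : A.card ≤ (Finset.range m).card := by
            apply Finset.card_le_card_of_injOn _ hinj
            intro a ha b hb hab
            by_contra hne
            rcases lt_or_gt_of_ne hne with h | h
            · have ha' := (Finset.mem_filter.mp ha).1
              have hb' := (Finset.mem_filter.mp hb).1
              exact absurd hab (Nat.ne_of_lt (hrank_mono a ha' b hb' h))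
            · have ha' := (Finset.mem_filter.mp ha).1
              have hb' := (Finset.mem_filter.mp hb).1
              exact absurd hab.symm (Nat.ne_of_lt (hrank_mono b hb' a ha' h))
          simpa using this
        have hminA : m ≤ minOf A := hminNle _ (Finset.mem_filter.mp (minOf_mem hAne)).1
        exact le_trans hcardA hminA
    · -- upper part
      have hWcard : W.card ≤ 2 * m := card_le_of_fibers ψ 2 hmem hfib
      -- m ≤ ψ b₀
      have hψb₀ : m ≤ ψ b₀ := by
        set X := W.filter (fun u => u ≤ b₀) with hX
        have hXcard : m + 1 ≤ X.card := by
          have hss : W.filter (fun u => u < b₀) ⊂ X := by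
            constructor
            · intro u hu
              rw [Finset.mem_filter] at hu ⊢
              exact ⟨hu.1, le_of_lt hu.2⟩
            · intro hcon
              have : b₀ ∈ W.filter (fun u => u < b₀) :=
                hcon (Finset.mem_filter.mpr ⟨hb₀W, le_refl _⟩)
              exact lt_irrefl b₀ (Finset.mem_filter.mp this).2
          have := Finset.card_lt_card hss
          omega
        set N' := N.filter (fun μ => μ ≤ ψ b₀) with hN'
        have hXN' : X.card ≤ 2 * N'.card := by
          apply card_le_of_fibers ψ 2
          · intro v hv
            rw [Finset.mem_filter] at hv ⊢
            exact ⟨hmem v hv.1, hmono v hv.1 b₀ hb₀W hv.2⟩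
          · intro μ
            refine le_trans (Finset.card_le_card ?_) (hfib μ)
            intro u hu
            rw [Finset.mem_filter] at hu ⊢
            exact ⟨(Finset.mem_filter.mp hu.1).1, hu.2⟩
        have hN'card : N'.card + minOf N ≤ ψ b₀ + 1 := by
          have hsub : N' ⊆ Finset.Icc (minOf N) (ψ b₀) := by
            intro μ hμ
            rw [Finset.mem_filter] at hμ
            rw [Finset.mem_Icc]
            exact ⟨minOf_le hμ.1, hμ.2⟩
          have h1 := Finset.card_le_card hsub
          rw [Nat.card_Icc] at h1
          have h2 : minOf N ≤ ψ b₀ := minOf_le (hmem b₀ hb₀W)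
          omega
        have hmN : m ≤ minOf N := hN
        have hm1 : 1 ≤ m := by
          have : ψ b₀ ∈ N := hmem b₀ hb₀W
          have : N.Nonempty := ⟨_, this⟩
          rw [hm]
          exact Finset.card_pos.mpr this
        have h2 : minOf N ≤ ψ b₀ := minOf_le (hmem b₀ hb₀W)
        omega
      rcases (W.filter (fun v => ¬ v < b₀)).eq_empty_or_nonempty with hBe | hBne
      · rw [hBe]; exact empty_mem_schreierOne
      · have hminB : b₀ ≤ minOf (W.filter (fun v => ¬ v < b₀)) := by
          have h1 := (Finset.mem_filter.mp (minOf_mem hBne)).2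
          omega
        have hcardB : (W.filter (fun v => ¬ v < b₀)).card ≤ m := by
          have h2 := Finset.card_filter_add_card_filter_not
            (s := W) (p := fun v => v < b₀)
          omega
        have hψle : ψ b₀ ≤ b₀ := hle b₀ hb₀W
        exact le_trans hcardB (le_trans hψb₀ (le_trans hψle hminB))
  · -- B0 empty : all of W is small
    refine ⟨0, ?_, ?_⟩
    · simpa using empty_mem_schreierOne
    · have hWall : W.filter (fun v => ¬ v < 0) = W := by
        apply Finset.filter_true_of_mem
        intro v _
        omega
      rw [hWall]
      rcases W.eq_empty_or_nonempty with rfl | hWne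
      · exact empty_mem_schreierOne
      · have hcardW : W.card ≤ m := by
          have hinj : ∀ a ∈ W, (W.filter (fun u => u < a)).card ∈ Finset.range m := by
            intro a ha
            rw [Finset.mem_range]
            by_contra hcon
            push_neg at hcon
            exact hB0 ⟨a, Finset.mem_filter.mpr ⟨ha, hcon⟩⟩
          have : W.card ≤ (Finset.range m).card := by
            apply Finset.card_le_card_of_injOn _ hinj
            intro a ha b hb hab
            by_contra hne
            rcases lt_or_gt_of_ne hne with h | h
            · exact absurd hab (Nat.ne_of_lt (hrank_mono a ha b hb h))
            · exact absurd hab.symm (Nat.ne_of_lt (hrank_mono b hb a ha h))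
          simpa using this
        exact le_trans hcardW (hminNle _ (minOf_mem hWne))

omit hseq in
lemma map_minOf_nodup {l : List (Finset ℕ)} (hne : ∀ E ∈ l, E.Nonempty)
    (hp : l.Pairwise finLT) : (l.map minOf).Nodup := by
  have h1 : (l.map minOf).Pairwise (· < ·) := by
    rw [List.pairwise_map]
    exact hp.imp_of_mem (fun {E F} hE hF h => minOf_lt_of_pairwise hne hp hE hF h)
  exact h1.imp (fun h => Nat.ne_of_lt h)

lemma split1 : ∀ {o : Ordinal.{0}}, o.card ≤ Cardinal.aleph0 →
    ∀ {M V : Finset ℕ} {ψ : ℕ → ℕ}, M ∈ schreier seq o →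
    (∀ v ∈ V, ψ v ∈ M) → (∀ v ∈ V, ψ v ≤ v) →
    (∀ v ∈ V, ∀ w ∈ V, v ≤ w → ψ v ≤ ψ w) →
    (∀ μ : ℕ, (V.filter (fun v => ψ v = μ)).card ≤ 1) →
    V ∈ schreier seq o := by
  intro o
  induction o using Ordinal.limitRecOn with
  | zero =>
    intro _ M V ψ hM hmem _ _ hfib
    rw [schreier_zero] at hM ⊢
    have h1 := card_le_of_fibers ψ 1 hmem hfib
    calc V.card ≤ 1 * M.card := h1
      _ ≤ 1 := by simpa [schreierZero] using hM
  | add_one o ih =>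
    rw [Ordinal.add_one_eq_succ]
    intro hco M V ψ hM hmem hle hmono hfib
    rw [← Ordinal.add_one_eq_succ, schreier_succ] at hM ⊢
    obtain ⟨lM, ⟨hlne, hch, hmins⟩, hmemS, rfl⟩ := hM
    classical
    have hp : lM.Pairwise finLT := chain'_pairwise hlne hch
    have hpg : ∀ d d' : Fin lM.length, d < d' → finLT (lM.get d) (lM.get d') := by
      rw [List.pairwise_iff_get] at hp; exact hp
    set D := lM.length with hD
    set Vd : Fin D → Finset ℕ := fun d => V.filter (fun v => ψ v ∈ lM.get d) with hVd
    have hVmem : ∀ v ∈ V, ∃ d : Fin D, v ∈ Vd d := by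
      intro v hv
      obtain ⟨E, hEl, hE⟩ := mem_foldr_union.mp (hmem v hv)
      obtain ⟨d, hd⟩ := List.mem_iff_get.mp hEl
      exact ⟨d, Finset.mem_filter.mpr ⟨hv, hd ▸ hE⟩⟩
    have hVdS : ∀ d : Fin D, Vd d ∈ schreier seq o := by
      intro d
      refine ih (ψ := ψ) (le_trans (Ordinal.card_le_card (Order.le_succ o)) hco)
        (hmemS _ (List.get_mem lM d)) ?_ ?_ ?_ ?_
      · intro v hv; exact (Finset.mem_filter.mp hv).2
      · intro v hv; exact hle v (Finset.mem_filter.mp hv).1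
      · intro v hv w hw hvw
        exact hmono v (Finset.mem_filter.mp hv).1 w (Finset.mem_filter.mp hw).1 hvw
      · intro μ
        refine le_trans (Finset.card_le_card ?_) (hfib μ)
        intro u hu
        rw [Finset.mem_filter] at hu ⊢
        exact ⟨(Finset.mem_filter.mp hu.1).1, hu.2⟩
    have hcross : ∀ d d' : Fin D, d < d' → finLT (Vd d) (Vd d') := by
      intro d d' hdd' v hv w hw
      have h1 : ψ v ∈ lM.get d := (Finset.mem_filter.mp hv).2
      have h2 : ψ w ∈ lM.get d' := (Finset.mem_filter.mp hw).2
      have h3 : ψ v < ψ w := hpg d d' hdd' _ h1 _ h2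
      by_contra hcon
      push_neg at hcon
      have := hmono w (Finset.mem_filter.mp hw).1 v (Finset.mem_filter.mp hv).1 hcon
      omega
    set lV := (List.ofFn Vd).filter (fun X => decide X.Nonempty) with hlV
    have hlVne : ∀ X ∈ lV, X.Nonempty := by
      intro X hX
      have := List.mem_filter.mp hX
      simpa using this.2
    have hlVmem : ∀ X ∈ lV, ∃ d : Fin D, X = Vd d := by
      intro X hX
      have h1 := (List.mem_filter.mp hX).1
      rw [List.mem_ofFn] at h1
      obtain ⟨d, hd⟩ := h1
      exact ⟨d, hd.symm⟩
    have hpV : lV.Pairwise finLT := by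
      apply List.Pairwise.filter
      rw [List.pairwise_ofFn]
      intro i j hij
      exact hcross i j hij
    refine ⟨lV, ⟨hlVne, hpV.isChain, ?_⟩, ?_, ?_⟩
    · rcases ((lV.map minOf).toFinset).eq_empty_or_nonempty with he | hne2
      · rw [he]; exact empty_mem_schreierOne
      · have hcard : ((lV.map minOf).toFinset).card ≤ ((lM.map minOf).toFinset).card := by
          calc ((lV.map minOf).toFinset).card ≤ (lV.map minOf).length :=
                List.toFinset_card_le _
            _ = lV.length := by simp
            _ ≤ (List.ofFn Vd).length := List.length_filter_le _ _
            _ = D := by simp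
            _ = (lM.map minOf).length := by simp [hD]
            _ = ((lM.map minOf).toFinset).card :=
                (List.toFinset_card_of_nodup (map_minOf_nodup hlne hp)).symm
        have hmin : minOf ((lM.map minOf).toFinset) ≤ minOf ((lV.map minOf).toFinset) := by
          have h0 := minOf_mem hne2
          rw [List.mem_toFinset, List.mem_map] at h0
          obtain ⟨X, hXl, hXmin⟩ := h0
          obtain ⟨d, rfl⟩ := hlVmem X hXl
          have hv0' : minOf (Vd d) ∈ Vd d := minOf_mem (hlVne _ hXl)
          have h1 : ψ (minOf (Vd d)) ∈ lM.get d := (Finset.mem_filter.mp hv0').2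
          have h2 : minOf (lM.get d) ≤ ψ (minOf (Vd d)) := minOf_le h1
          have h3 : ψ (minOf (Vd d)) ≤ minOf (Vd d) := hle _ (Finset.mem_filter.mp hv0').1
          have h4 : minOf ((lM.map minOf).toFinset) ≤ minOf (lM.get d) := by
            apply minOf_le
            rw [List.mem_toFinset, List.mem_map]
            exact ⟨lM.get d, List.get_mem lM d, rfl⟩
          rw [← hXmin]
          omega
        exact le_trans hcard (le_trans hmins hmin)
    · intro X hX
      obtain ⟨d, rfl⟩ := hlVmem X hX
      exact hVdS d
    · ext v
      rw [mem_foldr_union]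
      constructor
      · intro hv
        obtain ⟨d, hd⟩ := hVmem v hv
        refine ⟨Vd d, ?_, hd⟩
        rw [hlV, List.mem_filter]
        refine ⟨?_, ?_⟩
        · rw [List.mem_ofFn]; exact ⟨d, rfl⟩
        · rw [decide_eq_true_eq]; exact ⟨v, hd⟩
      · rintro ⟨X, hXl, hvX⟩
        obtain ⟨d, rfl⟩ := hlVmem X hXl
        exact (Finset.mem_filter.mp hvX).1
  | limit o ho ih =>
    intro hco M V ψ hM hmem hle hmono hfib
    rw [schreier_limit ho] at hM
    obtain ⟨n, hn, hlt, hMn⟩ := hM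
    have hV : V ∈ schreier seq (seq o n) :=
      ih _ hlt (card_le_aleph0_of_lt hlt hco) hMn hmem hle hmono hfib
    by_cases h0 : (0 : ℕ) ∈ V
    · have hψ0 : ψ 0 = 0 := Nat.le_zero.mp (hle 0 h0)
      have h0M : (0:ℕ) ∈ M := hψ0 ▸ hmem 0 h0
      have hM0 : M = {0} := zero_mem_schreier hseq hMn h0M
      have hn1 : n ≤ 1 := by
        rw [hM0] at hn; simpa using hn
      have hVcard : 1 ≤ V.card := Finset.card_pos.mpr ⟨0, h0⟩
      exact lift_into_limit hseq ho hco hV (Or.inl (le_trans hn1 hVcard))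
    · exact lift_into_limit hseq ho hco hV (Or.inr h0)

lemma split2 : ∀ {o : Ordinal.{0}}, o.card ≤ Cardinal.aleph0 →
    ∀ {M V : Finset ℕ} {ψ : ℕ → ℕ}, M ∈ schreier seq o →
    (∀ v ∈ V, ψ v ∈ M) → (∀ v ∈ V, ψ v ≤ v) →
    (∀ v ∈ V, ∀ w ∈ V, v ≤ w → ψ v ≤ ψ w) →
    (∀ μ : ℕ, (V.filter (fun v => ψ v = μ)).card ≤ 2) →
    V ∈ sqFam (schreier seq o) := by
  intro o
  induction o using Ordinal.limitRecOn with
  | zero =>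
    intro _ M V ψ hM hmem _ _ hfib
    rw [schreier_zero] at hM
    have h1 := card_le_of_fibers ψ 2 hmem hfib
    have h2 : V.card ≤ 2 := by
      have hM1 : M.card ≤ 1 := hM
      omega
    rcases Nat.lt_or_ge V.card 2 with hc | hc
    · refine ⟨V, ?_, ∅, ?_, ?_, (Finset.union_empty V).symm⟩
      · rw [schreier_zero]; exact Nat.lt_succ_iff.mp hc
      · rw [schreier_zero]; simp [schreierZero]
      · intro a _ b hb; exact absurd hb (Finset.notMem_empty b)
    · have hc2 : V.card = 2 := le_antisymm h2 hc
      obtain ⟨u, w, huw, hV⟩ := Finset.card_eq_two.mp hc2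
      rcases lt_or_gt_of_ne huw with h | h
      · refine ⟨{u}, ?_, {w}, ?_, ?_, ?_⟩
        · rw [schreier_zero]; simp [schreierZero]
        · rw [schreier_zero]; simp [schreierZero]
        · intro a ha b hb
          rw [Finset.mem_singleton] at ha hb; subst ha; subst hb; exact h
        · rw [hV]; rw [Finset.insert_eq]
      · refine ⟨{w}, ?_, {u}, ?_, ?_, ?_⟩
        · rw [schreier_zero]; simp [schreierZero]
        · rw [schreier_zero]; simp [schreierZero]
        · intro a ha b hb
          rw [Finset.mem_singleton] at ha hb; subst ha; subst hb; exact h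
        · rw [hV, Finset.pair_comm, Finset.insert_eq]
  | add_one o ih =>
    rw [Ordinal.add_one_eq_succ]
    intro hco M V ψ hM hmem hle hmono hfib
    rw [← Ordinal.add_one_eq_succ, schreier_succ] at hM
    obtain ⟨lM, ⟨hlne, hch, hmins⟩, hmemS, rfl⟩ := hM
    classical
    have hp : lM.Pairwise finLT := chain'_pairwise hlne hch
    have hpg : ∀ d d' : Fin lM.length, d < d' → finLT (lM.get d) (lM.get d') := by
      rw [List.pairwise_iff_get] at hp; exact hp
    set D := lM.length with hD
    set Vd : Fin D → Finset ℕ := fun d => V.filter (fun v => ψ v ∈ lM.get d) with hVd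
    have hVmem : ∀ v ∈ V, ∃ d : Fin D, v ∈ Vd d := by
      intro v hv
      obtain ⟨E, hEl, hE⟩ := mem_foldr_union.mp (hmem v hv)
      obtain ⟨d, hd⟩ := List.mem_iff_get.mp hEl
      exact ⟨d, Finset.mem_filter.mpr ⟨hv, hd ▸ hE⟩⟩
    have hVdsq : ∀ d : Fin D, Vd d ∈ sqFam (schreier seq o) := by
      intro d
      refine ih (ψ := ψ) (le_trans (Ordinal.card_le_card (Order.le_succ o)) hco)
        (hmemS _ (List.get_mem lM d)) ?_ ?_ ?_ ?_
      · intro v hv; exact (Finset.mem_filter.mp hv).2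
      · intro v hv; exact hle v (Finset.mem_filter.mp hv).1
      · intro v hv w hw hvw
        exact hmono v (Finset.mem_filter.mp hv).1 w (Finset.mem_filter.mp hw).1 hvw
      · intro μ
        refine le_trans (Finset.card_le_card ?_) (hfib μ)
        intro u hu
        rw [Finset.mem_filter] at hu ⊢
        exact ⟨(Finset.mem_filter.mp hu.1).1, hu.2⟩
    have hVdsq' : ∀ d : Fin D, ∃ A B : Finset ℕ, A ∈ schreier seq o ∧ B ∈ schreier seq o ∧
        finLT A B ∧ Vd d = A ∪ B := by
      intro d
      obtain ⟨A, hA, B, hB, hAB, hU⟩ := hVdsq d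
      exact ⟨A, B, hA, hB, hAB, hU⟩
    choose Ad Bd hAdS hBdS hABd hVdU using hVdsq'
    have hAsub : ∀ d, Ad d ⊆ Vd d := fun d => (hVdU d) ▸ Finset.subset_union_left
    have hBsub : ∀ d, Bd d ⊆ Vd d := fun d => (hVdU d) ▸ Finset.subset_union_right
    have hcross : ∀ d d' : Fin D, d < d' → finLT (Vd d) (Vd d') := by
      intro d d' hdd' v hv w hw
      have h1 : ψ v ∈ lM.get d := (Finset.mem_filter.mp hv).2
      have h2 : ψ w ∈ lM.get d' := (Finset.mem_filter.mp hw).2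
      have h3 : ψ v < ψ w := hpg d d' hdd' _ h1 _ h2
      by_contra hcon
      push_neg at hcon
      have := hmono w (Finset.mem_filter.mp hw).1 v (Finset.mem_filter.mp hv).1 hcon
      omega
    set ent : Fin D → List (Finset ℕ) :=
      fun d => [Ad d, Bd d].filter (fun X => decide X.Nonempty) with hent
    set bl := (List.ofFn ent).flatten with hbl
    have hblmem : ∀ X ∈ bl, ∃ d : Fin D, (X = Ad d ∨ X = Bd d) ∧ X.Nonempty ∧ X ⊆ Vd d := by
      intro X hX
      rw [hbl, List.mem_flatten] at hX
      obtain ⟨li, hli, hXli⟩ := hX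
      rw [List.mem_ofFn] at hli
      obtain ⟨d, rfl⟩ := hli
      rw [hent] at hXli
      have h1 := List.mem_filter.mp hXli
      have h2 : X = Ad d ∨ X = Bd d := by
        have := h1.1
        simp only [List.mem_cons, List.mem_singleton, List.not_mem_nil, or_false] at this
        exact this
      have h3 : X.Nonempty := by simpa using h1.2
      refine ⟨d, h2, h3, ?_⟩
      rcases h2 with rfl | rfl
      · exact hAsub d
      · exact hBsub d
    have hblne : ∀ X ∈ bl, X.Nonempty := fun X hX => (hblmem X hX).choose_spec.2.1
    have hpbl : bl.Pairwise finLT := by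
      rw [hbl, List.pairwise_flatten]
      constructor
      · intro li hli
        rw [List.mem_ofFn] at hli
        obtain ⟨d, rfl⟩ := hli
        rw [hent]
        apply List.Pairwise.filter
        rw [List.pairwise_cons]
        refine ⟨?_, List.pairwise_singleton _ _⟩
        intro b hb
        rw [List.mem_singleton] at hb
        subst hb
        exact hABd d
      · rw [List.pairwise_ofFn]
        intro i j hij X hXi Y hYj
        have hXs : X ⊆ Vd i := by
          rw [hent] at hXi
          have h1 := (List.mem_filter.mp hXi).1
          simp only [List.mem_cons, List.mem_singleton, List.not_mem_nil, or_false] at h1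
          rcases h1 with rfl | rfl
          · exact hAsub i
          · exact hBsub i
        have hYs : Y ⊆ Vd j := by
          rw [hent] at hYj
          have h1 := (List.mem_filter.mp hYj).1
          simp only [List.mem_cons, List.mem_singleton, List.not_mem_nil, or_false] at h1
          rcases h1 with rfl | rfl
          · exact hAsub j
          · exact hBsub j
        intro a ha b hb
        exact hcross i j hij a (hXs ha) b (hYs hb)
    have huniq : ∀ (a : ℕ) (d d' : Fin D), a ∈ lM.get d → a ∈ lM.get d' → d = d' := by
      intro a d d' h1 h2
      by_contra hne
      rcases lt_or_gt_of_ne hne with h | h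
      · exact lt_irrefl a (hpg d d' h a h1 a h2)
      · exact lt_irrefl a (hpg d' d h a h2 a h1)
    set ψh : ℕ → ℕ :=
      fun w => if h : ∃ d : Fin D, ψ w ∈ lM.get d then minOf (lM.get h.choose) else 0 with hψh
    have hψh_spec : ∀ (w : ℕ) (d : Fin D), ψ w ∈ lM.get d → ψh w = minOf (lM.get d) := by
      intro w d hwd
      have hex : ∃ d : Fin D, ψ w ∈ lM.get d := ⟨d, hwd⟩
      rw [hψh]
      simp only [dif_pos hex]
      exact congrArg (fun e => minOf (lM.get e)) (huniq _ _ _ hex.choose_spec hwd)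
    set Wset := (bl.map minOf).toFinset with hWset
    have hWd : ∀ w ∈ Wset, ∃ d : Fin D, w ∈ Vd d ∧ ψ w ∈ lM.get d ∧
        ψh w = minOf (lM.get d) ∧ ∃ X, (X = Ad d ∨ X = Bd d) ∧ X ∈ bl ∧ minOf X = w := by
      intro w hw
      rw [hWset, List.mem_toFinset, List.mem_map] at hw
      obtain ⟨X, hXbl, hXmin⟩ := hw
      obtain ⟨d, hXAB, hXne, hXsub⟩ := hblmem X hXbl
      have hwX : w ∈ X := hXmin ▸ minOf_mem hXne
      have hwVd : w ∈ Vd d := hXsub hwX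
      have hψwd : ψ w ∈ lM.get d := (Finset.mem_filter.mp hwVd).2
      exact ⟨d, hwVd, hψwd, hψh_spec w d hψwd, X, hXAB, hXbl, hXmin⟩
    have hWV : ∀ w ∈ Wset, w ∈ V := by
      intro w hw
      obtain ⟨d, hwVd, _, _, _⟩ := hWd w hw
      exact (Finset.mem_filter.mp hwVd).1
    have hsq1mem : ∀ w ∈ Wset, ψh w ∈ (lM.map minOf).toFinset := by
      intro w hw
      obtain ⟨d, _, _, heq, _⟩ := hWd w hw
      rw [heq, List.mem_toFinset, List.mem_map]
      exact ⟨lM.get d, List.get_mem lM d, rfl⟩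
    have hsq1le : ∀ w ∈ Wset, ψh w ≤ w := by
      intro w hw
      obtain ⟨d, hwVd, hψwd, heq, _⟩ := hWd w hw
      rw [heq]
      exact le_trans (minOf_le hψwd) (hle w (Finset.mem_filter.mp hwVd).1)
    have hsq1mono : ∀ v ∈ Wset, ∀ w ∈ Wset, v ≤ w → ψh v ≤ ψh w := by
      intro v hv w hw hvw
      obtain ⟨dv, hvVd, hψvd, heqv, _⟩ := hWd v hv
      obtain ⟨dw, hwVd, hψwd, heqw, _⟩ := hWd w hw
      rw [heqv, heqw]
      have hψvw : ψ v ≤ ψ w :=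
        hmono v (Finset.mem_filter.mp hvVd).1 w (Finset.mem_filter.mp hwVd).1 hvw
      have hdd : dv ≤ dw := by
        by_contra hcon
        push_neg at hcon
        have := hpg dw dv hcon _ hψwd _ hψvd
        omega
      rcases eq_or_lt_of_le hdd with h | h
      · rw [h]
      · exact (minOf_lt_of_pairwise hlne hp (List.get_mem lM dv)
          (List.get_mem lM dw) (hpg dv dw h)).le
    have hsq1fib : ∀ μ : ℕ, (Wset.filter (fun v => ψh v = μ)).card ≤ 2 := by
      intro μ
      rcases (Wset.filter (fun v => ψh v = μ)).eq_empty_or_nonempty with he | hne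
      · rw [he]; simp
      · obtain ⟨w₀, hw₀⟩ := hne
        have hw₀W := (Finset.mem_filter.mp hw₀).1
        have hw₀μ := (Finset.mem_filter.mp hw₀).2
        obtain ⟨d₀, _, _, heq₀, _⟩ := hWd w₀ hw₀W
        have hsub : (Wset.filter (fun v => ψh v = μ)) ⊆
            {minOf (Ad d₀), minOf (Bd d₀)} := by
          intro w hw
          have hwW := (Finset.mem_filter.mp hw).1
          have hwμ := (Finset.mem_filter.mp hw).2
          obtain ⟨d, _, _, heqd, X, hXAB, _, hXmin⟩ := hWd w hwW
          have hdd₀ : d = d₀ := by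
            by_contra hne'
            have h1 : minOf (lM.get d) = minOf (lM.get d₀) := by
              rw [← heqd, ← heq₀, hwμ, hw₀μ]
            rcases lt_or_gt_of_ne hne' with h | h
            · exact absurd h1 (Nat.ne_of_lt (minOf_lt_of_pairwise hlne hp
                (List.get_mem lM d) (List.get_mem lM d₀) (hpg d d₀ h)))
            · exact absurd h1.symm (Nat.ne_of_lt (minOf_lt_of_pairwise hlne hp
                (List.get_mem lM d₀) (List.get_mem lM d) (hpg d₀ d h)))
          subst hdd₀
          rcases hXAB with rfl | rfl
          · rw [← hXmin]; exact Finset.mem_insert_self _ _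
          · rw [← hXmin]; exact Finset.mem_insert.mpr (Or.inr (Finset.mem_singleton_self _))
        refine le_trans (Finset.card_le_card hsub) ?_
        refine le_trans (Finset.card_insert_le _ _) ?_
        simp
    obtain ⟨θ, hθlow, hθhigh⟩ :=
      sq1 (W := Wset) hmins ψh hsq1mem hsq1le hsq1mono hsq1fib
    -- now build the two halves
    · set listA := bl.filter (fun X => decide (minOf X < θ)) with hlistA
      set listB := bl.filter (fun X => decide (¬ minOf X < θ)) with hlistB
      have hminsetA : ((listA.map minOf).toFinset) = Wset.filter (fun v => v < θ) := by
        ext u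
        rw [List.mem_toFinset, List.mem_map, Finset.mem_filter]
        constructor
        · rintro ⟨X, hXl, rfl⟩
          rw [hlistA, List.mem_filter] at hXl
          refine ⟨?_, by simpa using hXl.2⟩
          rw [hWset, List.mem_toFinset, List.mem_map]
          exact ⟨X, hXl.1, rfl⟩
        · rintro ⟨hu, huθ⟩
          rw [hWset, List.mem_toFinset, List.mem_map] at hu
          obtain ⟨X, hXbl, hXmin⟩ := hu
          refine ⟨X, ?_, hXmin⟩
          rw [hlistA, List.mem_filter]
          exact ⟨hXbl, by simpa using hXmin ▸ huθ⟩
      have hminsetB : ((listB.map minOf).toFinset) = Wset.filter (fun v => ¬ v < θ) := by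
        ext u
        rw [List.mem_toFinset, List.mem_map, Finset.mem_filter]
        constructor
        · rintro ⟨X, hXl, rfl⟩
          rw [hlistB, List.mem_filter] at hXl
          refine ⟨?_, by simpa using hXl.2⟩
          rw [hWset, List.mem_toFinset, List.mem_map]
          exact ⟨X, hXl.1, rfl⟩
        · rintro ⟨hu, huθ⟩
          rw [hWset, List.mem_toFinset, List.mem_map] at hu
          obtain ⟨X, hXbl, hXmin⟩ := hu
          refine ⟨X, ?_, hXmin⟩
          rw [hlistB, List.mem_filter]
          exact ⟨hXbl, by rw [decide_eq_true_eq, hXmin]; exact huθ⟩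
      have hmemo : ∀ X ∈ bl, X ∈ schreier seq o := by
        intro X hX
        obtain ⟨d, hXAB, _, _⟩ := hblmem X hX
        rcases hXAB with rfl | rfl
        · exact hAdS d
        · exact hBdS d
      have hAfam : List.foldr (· ∪ ·) ∅ listA ∈ schreier seq (Order.succ o) := by
        rw [← Ordinal.add_one_eq_succ, schreier_succ]
        refine ⟨listA, ⟨?_, ?_, ?_⟩, ?_, rfl⟩
        · intro X hX
          exact hblne X (List.mem_of_mem_filter hX)
        · exact (hpbl.filter _).isChain
        · rw [hminsetA]; exact hθlow
        · intro X hX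
          exact hmemo X (List.mem_of_mem_filter hX)
      have hBfam : List.foldr (· ∪ ·) ∅ listB ∈ schreier seq (Order.succ o) := by
        rw [← Ordinal.add_one_eq_succ, schreier_succ]
        refine ⟨listB, ⟨?_, ?_, ?_⟩, ?_, rfl⟩
        · intro X hX
          exact hblne X (List.mem_of_mem_filter hX)
        · exact (hpbl.filter _).isChain
        · rw [hminsetB]; exact hθhigh
        · intro X hX
          exact hmemo X (List.mem_of_mem_filter hX)
      refine ⟨_, hAfam, _, hBfam, ?_, ?_⟩
      · -- finLT between the two unions
        intro a ha b hb
        obtain ⟨X, hXl, haX⟩ := mem_foldr_union.mp ha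
        obtain ⟨Y, hYl, hbY⟩ := mem_foldr_union.mp hb
        have hXbl : X ∈ bl := List.mem_of_mem_filter hXl
        have hYbl : Y ∈ bl := List.mem_of_mem_filter hYl
        have hXθ : minOf X < θ := by
          have := (List.mem_filter.mp hXl).2; simpa using this
        have hYθ : ¬ minOf Y < θ := by
          have := (List.mem_filter.mp hYl).2; simpa using this
        have hXY : X ≠ Y := by
          intro h; rw [h] at hXθ; exact hYθ hXθ
        rcases pairwise_mem_cases hpbl hXbl hYbl with h | h | h
        · exact absurd h hXY
        · exact h a haX b hbY
        · exfalso
          have h1 : minOf Y < minOf X :=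
            minOf_lt_of_pairwise hblne hpbl hYbl hXbl h
          omega
      · -- V = A ∪ B
        ext v
        rw [Finset.mem_union, mem_foldr_union, mem_foldr_union]
        constructor
        · intro hv
          obtain ⟨d, hd⟩ := hVmem v hv
          have hd' : v ∈ Ad d ∪ Bd d := (hVdU d) ▸ hd
          have : ∃ X, (X = Ad d ∨ X = Bd d) ∧ v ∈ X := by
            rcases Finset.mem_union.mp hd' with h | h
            · exact ⟨Ad d, Or.inl rfl, h⟩
            · exact ⟨Bd d, Or.inr rfl, h⟩
          obtain ⟨X, hXAB, hvX⟩ := this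
          have hXbl : X ∈ bl := by
            rw [hbl, List.mem_flatten]
            refine ⟨ent d, ?_, ?_⟩
            · rw [List.mem_ofFn]; exact ⟨d, rfl⟩
            · rw [hent, List.mem_filter]
              constructor
              · rcases hXAB with rfl | rfl
                · simp
                · simp
              · rw [decide_eq_true_eq]; exact ⟨v, hvX⟩
          by_cases hXθ : minOf X < θ
          · exact Or.inl ⟨X, by rw [hlistA, List.mem_filter]; exact ⟨hXbl, by simpa using hXθ⟩, hvX⟩
          · exact Or.inr ⟨X, by rw [hlistB, List.mem_filter]; exact ⟨hXbl, by simpa using hXθ⟩, hvX⟩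
        · intro hv
          rcases hv with ⟨X, hXl, hvX⟩ | ⟨X, hXl, hvX⟩
          · obtain ⟨d, _, _, hXsub⟩ := hblmem X (List.mem_of_mem_filter hXl)
            exact (Finset.mem_filter.mp (hXsub hvX)).1
          · obtain ⟨d, _, _, hXsub⟩ := hblmem X (List.mem_of_mem_filter hXl)
            exact (Finset.mem_filter.mp (hXsub hvX)).1
  | limit o ho ih =>
    intro hco M V ψ hM hmem hle hmono hfib
    rw [schreier_limit ho] at hM
    obtain ⟨n, hn, hlt, hMn⟩ := hM
    have hV : V ∈ sqFam (schreier seq (seq o n)) :=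
      ih _ hlt (card_le_aleph0_of_lt hlt hco) hMn hmem hle hmono hfib
    obtain ⟨A, hA, B, hB, hAB, hU⟩ := hV
    have hlift : ∀ X : Finset ℕ, X ⊆ V → X ∈ schreier seq (seq o n) →
        X ∈ schreier seq o := by
      intro X hXV hXn
      by_cases h0 : (0 : ℕ) ∈ X
      · have h0V : (0:ℕ) ∈ V := hXV h0
        have hψ0 : ψ 0 = 0 := Nat.le_zero.mp (hle 0 h0V)
        have h0M : (0:ℕ) ∈ M := hψ0 ▸ hmem 0 h0V
        have hM0 : M = {0} := zero_mem_schreier hseq hMn h0M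
        have hn1 : n ≤ 1 := by rw [hM0] at hn; simpa using hn
        have hXcard : 1 ≤ X.card := Finset.card_pos.mpr ⟨0, h0⟩
        exact lift_into_limit hseq ho hco hXn (Or.inl (le_trans hn1 hXcard))
      · exact lift_into_limit hseq ho hco hXn (Or.inr h0)
    have hAV : A ⊆ V := hU ▸ Finset.subset_union_left
    have hBV : B ⊆ V := hU ▸ Finset.subset_union_right
    exact ⟨A, hlift A hAV hA, B, hlift B hBV hB, hAB, hU⟩

end SchreierSec



/-- `σ_F(x) = ∑_{n ∈ F} |x n|`. -/
noncomputable def sigmaF (F : Finset ℕ) (x : ℕ →₀ ℝ) : ℝ := ∑ n ∈ F, |x n|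

/-- `‖x‖_𝓕 = sup_{F ∈ 𝓕} σ_F(x)`. -/
noncomputable def famNorm (𝓕 : Set (Finset ℕ)) (x : ℕ →₀ ℝ) : ℝ :=
  sSup {r : ℝ | ∃ F ∈ 𝓕, r = sigmaF F x}

/-- `E x`: the coordinate restriction of `x` to `E`. -/
noncomputable def restr (E : Finset ℕ) (x : ℕ →₀ ℝ) : ℕ →₀ ℝ :=
  Finsupp.filter (· ∈ E) x

/-- The norms `‖·‖_n` (when `Sadm = S_β`), resp. `‖·‖′_n` (when `Sadm = (S_β)²`):
`‖·‖₀ = ‖·‖_{S_α}` and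
`‖x‖_{n+1} = max{‖x‖_n, sup{(1/2)∑ᵢ ‖Eᵢx‖_n : {E₁,…,E_j} Sadm-admissible}}`. -/
noncomputable def normSeq (Sa Sadm : Set (Finset ℕ)) : ℕ → (ℕ →₀ ℝ) → ℝ
  | 0, x => famNorm Sa x
  | n + 1, x =>
      max (normSeq Sa Sadm n x)
        (sSup {r : ℝ | ∃ l : List (Finset ℕ), IsAdmissible Sadm l ∧
          r = (1 / 2) * ((l.map fun E => normSeq Sa Sadm n (restr E x)).sum)})

/-- `‖x‖_{T̃}` (resp. `‖x‖_{T̈}`): the limit (= supremum, the sequence being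
nondecreasing) of the norms `‖x‖_n` (resp. `‖x‖′_n`). -/
noncomputable def tnorm (Sa Sadm : Set (Finset ℕ)) (x : ℕ →₀ ℝ) : ℝ :=
  ⨆ n : ℕ, normSeq Sa Sadm n x

/-- The families `𝓕_n` (with `Sadm = S_β`), resp. `𝓕′_n` (with `Sadm = (S_β)²`):
`𝓕₀ = S_α`, `𝓕_{n+1} = Sadm[𝓕_n]`. -/
def famF (Sa Sadm : Set (Finset ℕ)) : ℕ → Set (Finset ℕ)
  | 0 => Sa
  | n + 1 => famComp Sadm (famF Sa Sadm n)

/-- The families `𝓖_n` (with `Sadm = S_β`), resp. `𝓖′_n` (with `Sadm = (S_β)²`),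
reindexed: `famG Sadm n = 𝓖_{n+1}`, i.e. `famG Sadm 0 = 𝓖₁ = Sadm` and
`𝓖_{n+2} = Sadm[𝓖_{n+1}]`. -/
def famG (Sadm : Set (Finset ℕ)) : ℕ → Set (Finset ℕ)
  | 0 => Sadm
  | n + 1 => famComp Sadm (famG Sadm n)

/-- Hereditary family. -/
def Hereditary (𝓕 : Set (Finset ℕ)) : Prop := ∀ A ∈ 𝓕, ∀ B ⊆ A, B ∈ 𝓕

/-- Spreading family. -/
def Spreading (𝓕 : Set (Finset ℕ)) : Prop :=
  ∀ A ∈ 𝓕, ∀ g : ℕ → ℕ, StrictMonoOn g (A : Set ℕ) → (∀ a ∈ A, a ≤ g a) →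
    A.image g ∈ 𝓕

/-- Compactness of a family of finite sets, viewed inside `2^ℕ` (ℕ → Bool with the
product topology) via characteristic functions. -/
def CompactFam (𝓕 : Set (Finset ℕ)) : Prop :=
  IsCompact ((fun A : Finset ℕ => fun n : ℕ => decide (n ∈ A)) '' 𝓕)

/-- Regular family: hereditary, spreading and compact. -/
def RegularFam (𝓕 : Set (Finset ℕ)) : Prop :=
  Hereditary 𝓕 ∧ Spreading 𝓕 ∧ CompactFam 𝓕

/-- The Cantor–Bendixson derivative of a family of finite subsets of ℕ: the set of
its limit points in the product topology of `2^ℕ` (a basic neighbourhood of `A` is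
determined by an agreement of initial segments). -/
def famDeriv (𝓕 : Set (Finset ℕ)) : Set (Finset ℕ) :=
  {A | ∀ m : ℕ, ∃ B ∈ 𝓕, B ≠ A ∧ B.filter (· ≤ m) = A.filter (· ≤ m)}

/-- Iterated Cantor–Bendixson derivatives `𝓕^{(o)}`. -/
noncomputable def famDerivIter (𝓕 : Set (Finset ℕ)) (o : Ordinal.{0}) : Set (Finset ℕ) :=
  Ordinal.limitRecOn (motive := fun _ => Set (Finset ℕ)) o 𝓕
    (fun _ S => famDeriv S)
    (fun o _ ih => ⋂ (o' : Ordinal) (h : o' < o), ih o' h)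

/-- One step of the standard representation: `A` is obtained from the remainder `R`
as `R ∩ [1, k]` where `k` is the largest element of `F` with `R ∩ [1, k] ∈ 𝓝`. -/
def stepOf (N : Set (Finset ℕ)) (F R A : Finset ℕ) : Prop :=
  ∃ k ∈ F, A = R.filter (· ≤ k) ∧ A ∈ N ∧
    ∀ k' ∈ F, R.filter (· ≤ k') ∈ N → k' ≤ k

/-- `IsStdRepFrom N F R L`: starting from remainder `R`, the list `L` is produced by
the greedy recursion defining the standard representation, exhausting `R`. -/
def IsStdRepFrom (N : Set (Finset ℕ)) (F : Finset ℕ) : Finset ℕ → List (Finset ℕ) → Prop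
  | R, [] => R = ∅
  | R, A :: L => stepOf N F R A ∧ IsStdRepFrom N F (R \ A) L

/-- `L` is the standard representation of `F` (as an element of `𝓜[𝓝]`). -/
def IsStdRep (N : Set (Finset ℕ)) (F : Finset ℕ) (L : List (Finset ℕ)) : Prop :=
  IsStdRepFrom N F F L

section Trees

variable {X : Type*}

/-- A tree on `X`: a set of nonempty finite sequences closed under nonempty initial
segments. -/
def IsTree (T : Set (List X)) : Prop :=
  ∀ l ∈ T, l ≠ [] ∧ ∀ m : ℕ, 0 < m → m < l.length → l.take m ∈ T

/-- A tree is well-founded if it has no infinite branch. -/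
def WellFoundedTree (T : Set (List X)) : Prop :=
  ¬ ∃ f : ℕ → X, ∀ n : ℕ, (List.ofFn fun i : Fin (n + 1) => f i) ∈ T

/-- The derived tree `D(T)`. -/
def treeDeriv (T : Set (List X)) : Set (List X) :=
  {l | l ∈ T ∧ ∃ x : X, l ++ [x] ∈ T}

/-- Iterated derived trees `D^o(T)`. -/
noncomputable def treeDerivIter (T : Set (List X)) (o : Ordinal.{0}) : Set (List X) :=
  Ordinal.limitRecOn (motive := fun _ => Set (List X)) o T
    (fun _ S => treeDeriv S)
    (fun o _ ih => ⋂ (o' : Ordinal) (h : o' < o), ih o' h)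

/-- The order `o(T)` of a (well-founded) tree. -/
noncomputable def treeOrder (T : Set (List X)) : Ordinal.{0} :=
  sInf {o : Ordinal | treeDerivIter T o = ∅}

end Trees

section Banach

variable (X : Type) [NormedAddCommGroup X] [NormedSpace ℝ X]

/-- `cs` witnesses that the node `l` is a finite block basis of `(e_i)`: each entry
of `l` is the (finite, nonzero) linear combination of the `e_i` given by the
corresponding entry of `cs`, and the supports are successive. -/
def IsBlockNode (e : ℕ → X) (l : List X) (cs : List (ℕ →₀ ℝ)) : Prop :=
  cs.length = l.length ∧
  (∀ (i : ℕ) (h : i < cs.length) (h' : i < l.length),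
    l.get ⟨i, h'⟩ = (cs.get ⟨i, h⟩).sum fun n r => r • e n) ∧
  (∀ c ∈ cs, c ≠ 0) ∧
  cs.Chain' fun c d => finLT c.support d.support

/-- `e` is a (Schauder) basis of `X`. -/
def IsSchauderBasis (e : ℕ → X) : Prop :=
  ∀ x : X, ∃! a : ℕ → ℝ,
    Tendsto (fun n => ∑ i ∈ Finset.range n, a i • e i) atTop (𝓝 x)

/-- An `ℓ¹`-`K` tree on `X`: a tree on the unit sphere of `X` such that every node
`(x₁, …, x_n)` satisfies `‖∑ aᵢ xᵢ‖ ≥ K⁻¹ ∑ |aᵢ|`. -/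
def IsL1Tree (K : ℝ) (T : Set (List X)) : Prop :=
  IsTree T ∧ ∀ l ∈ T, (∀ x ∈ l, ‖x‖ = 1) ∧
    ∀ a : Fin l.length → ℝ, K⁻¹ * ∑ i, |a i| ≤ ‖∑ i : Fin l.length, a i • l.get i‖

/-- `I(X, K)`: the supremum of the orders of well-founded `ℓ¹`-`K` trees on `X`. -/
noncomputable def bourgainIndexK (K : ℝ) : Ordinal.{0} :=
  ⨆ T : {T : Set (List X) // IsL1Tree X K T ∧ WellFoundedTree T}, treeOrder T.1

/-- The Bourgain `ℓ¹`-index `I(X) = sup_{1 ≤ K < ∞} I(X, K)`. -/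
noncomputable def bourgainIndex : Ordinal.{0} :=
  ⨆ K : {K : ℝ // 1 ≤ K}, bourgainIndexK X K.1

/-- `I_b(X, K)` relative to the basis `e`: the supremum of the orders of
well-founded `ℓ¹`-`K` block trees on `X`. -/
noncomputable def blockIndexK (e : ℕ → X) (K : ℝ) : Ordinal.{0} :=
  ⨆ T : {T : Set (List X) //
      IsL1Tree X K T ∧ (∀ l ∈ T, ∃ cs, IsBlockNode X e l cs) ∧ WellFoundedTree T},
    treeOrder T.1

/-- The block `ℓ¹`-index `I_b(X) = sup_{1 ≤ K < ∞} I_b(X, K)`. -/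
noncomputable def blockIndex (e : ℕ → X) : Ordinal.{0} :=
  ⨆ K : {K : ℝ // 1 ≤ K}, blockIndexK X e K.1

end Banach


noncomputable def l1 (x : ℕ →₀ ℝ) : ℝ := ∑ j ∈ x.support, |x j|

lemma l1_nonneg (x : ℕ →₀ ℝ) : 0 ≤ l1 x :=
  Finset.sum_nonneg (fun j _ => abs_nonneg _)

lemma sigmaF_nonneg (F : Finset ℕ) (x : ℕ →₀ ℝ) : 0 ≤ sigmaF F x :=
  Finset.sum_nonneg (fun j _ => abs_nonneg _)

lemma sigmaF_le_l1 (F : Finset ℕ) (x : ℕ →₀ ℝ) : sigmaF F x ≤ l1 x := by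
  rw [sigmaF, l1]
  have h1 : ∑ j ∈ F, |x j| = ∑ j ∈ F ∩ x.support, |x j| := by
    refine (Finset.sum_subset Finset.inter_subset_left ?_).symm
    intro j _ hj
    have : j ∉ x.support := by
      intro hc
      exact hj (Finset.mem_inter.mpr ⟨‹j ∈ F›, hc⟩)
    simpa using Finsupp.notMem_support_iff.mp this
  rw [h1]
  exact Finset.sum_le_sum_of_subset_of_nonneg Finset.inter_subset_right
    (fun j _ _ => abs_nonneg _)

lemma famNorm_bddAbove (𝓕 : Set (Finset ℕ)) (x : ℕ →₀ ℝ) :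
    BddAbove {r : ℝ | ∃ F ∈ 𝓕, r = sigmaF F x} := by
  refine ⟨l1 x, ?_⟩
  rintro r ⟨F, _, rfl⟩
  exact sigmaF_le_l1 F x

lemma le_famNorm {𝓕 : Set (Finset ℕ)} {F : Finset ℕ} (hF : F ∈ 𝓕) (x : ℕ →₀ ℝ) :
    sigmaF F x ≤ famNorm 𝓕 x :=
  le_csSup (famNorm_bddAbove 𝓕 x) ⟨F, hF, rfl⟩

lemma famNorm_nonneg {𝓕 : Set (Finset ℕ)} (h : ∅ ∈ 𝓕) (x : ℕ →₀ ℝ) :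
    0 ≤ famNorm 𝓕 x := by
  have := le_famNorm h x
  simpa [sigmaF] using this

lemma famNorm_le {𝓕 : Set (Finset ℕ)} {x : ℕ →₀ ℝ} {C : ℝ}
    (h : ∀ F ∈ 𝓕, sigmaF F x ≤ C) (hC : 0 ≤ C) : famNorm 𝓕 x ≤ C := by
  refine Real.sSup_le ?_ hC
  rintro r ⟨F, hF, rfl⟩
  exact h F hF

lemma restr_apply (E : Finset ℕ) (x : ℕ →₀ ℝ) (j : ℕ) :
    restr E x j = if j ∈ E then x j else 0 := Finsupp.filter_apply _ _ _

lemma abs_restr_apply_le (E : Finset ℕ) (x : ℕ →₀ ℝ) (j : ℕ) :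
    |restr E x j| ≤ |x j| := by
  rw [restr_apply]
  split
  · exact le_refl _
  · simp

lemma restr_empty (x : ℕ →₀ ℝ) : restr ∅ x = 0 := by
  ext j; simp [restr_apply]

lemma restr_zero (E : Finset ℕ) : restr E (0 : ℕ →₀ ℝ) = 0 := by
  ext j; simp [restr_apply]

lemma restr_add (E : Finset ℕ) (u v : ℕ →₀ ℝ) :
    restr E (u + v) = restr E u + restr E v := Finsupp.filter_add

lemma restr_smul (E : Finset ℕ) (c : ℝ) (u : ℕ →₀ ℝ) :
    restr E (c • u) = c • restr E u := by
  ext j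
  rw [Finsupp.smul_apply, restr_apply, restr_apply, Finsupp.smul_apply]
  split <;> simp

lemma restr_sum {ι : Type*} (E : Finset ℕ) (S : Finset ι) (f : ι → ℕ →₀ ℝ) :
    restr E (∑ k ∈ S, f k) = ∑ k ∈ S, restr E (f k) := by
  ext j
  rw [restr_apply, Finsupp.finset_sum_apply, Finsupp.finset_sum_apply]
  split
  · exact Finset.sum_congr rfl (fun k _ => by rw [restr_apply, if_pos ‹j ∈ E›])
  · symm
    refine Finset.sum_eq_zero (fun k _ => ?_)
    rw [restr_apply, if_neg ‹j ∉ E›]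

lemma restr_single (E : Finset ℕ) (a : ℕ) (t : ℝ) :
    restr E (Finsupp.single a t) = if a ∈ E then Finsupp.single a t else 0 := by
  split
  · exact Finsupp.filter_single_of_pos _ ‹a ∈ E›
  · exact Finsupp.filter_single_of_neg _ ‹a ∉ E›

lemma restr_eq_zero {E : Finset ℕ} {x : ℕ →₀ ℝ} (h : ∀ j ∈ x.support, j ∉ E) :
    restr E x = 0 := by
  ext j
  rw [restr_apply]
  split
  · by_contra hc
    exact h j (Finsupp.mem_support_iff.mpr (by simpa using hc)) ‹j ∈ E›
  · rfl

lemma l1_restr (E : Finset ℕ) (x : ℕ →₀ ℝ) :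
    l1 (restr E x) = ∑ j ∈ x.support ∩ E, |x j| := by
  rw [l1]
  have hsupp : (restr E x).support = x.support ∩ E := by
    rw [restr, Finsupp.support_filter, Finset.filter_mem_eq_inter]
  rw [hsupp]
  refine Finset.sum_congr rfl (fun j hj => ?_)
  rw [restr_apply, if_pos (Finset.mem_inter.mp hj).2]

lemma sum_sum_le {f : ℕ → ℝ} (hf : ∀ j, 0 ≤ f j) :
    ∀ (L : List (Finset ℕ)) (t : Finset ℕ), L.Pairwise (fun E F => Disjoint E F) →
      (∀ s ∈ L, s ⊆ t) → (L.map (fun s => ∑ j ∈ s, f j)).sum ≤ ∑ j ∈ t, f j := by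
  intro L
  induction L with
  | nil => intro t _ _; simpa using Finset.sum_nonneg (fun j _ => hf j)
  | cons s L ih =>
    intro t hp hsub
    rw [List.map_cons, List.sum_cons]
    have h1 : (L.map (fun s => ∑ j ∈ s, f j)).sum ≤ ∑ j ∈ t \ s, f j := by
      refine ih (t \ s) (List.pairwise_cons.mp hp).2 ?_
      intro s' hs'
      have hd : Disjoint s s' := (List.pairwise_cons.mp hp).1 s' hs'
      intro a ha
      rw [Finset.mem_sdiff]
      exact ⟨hsub s' (List.mem_cons_of_mem _ hs') ha,
        fun hc => (Finset.disjoint_right.mp hd) ha hc⟩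
    have h2 : ∑ j ∈ t \ s, f j + ∑ j ∈ s, f j = ∑ j ∈ t, f j :=
      Finset.sum_sdiff (hsub s List.mem_cons_self)
    linarith
/-! ### Section G : normSeq estimates -/

section NormSec

variable {Sa Sadm : Set (Finset ℕ)}

lemma list_sum_map_add {α : Type*} (l : List α) (f g : α → ℝ) :
    (l.map (fun a => f a + g a)).sum = (l.map f).sum + (l.map g).sum := by
  induction l with
  | nil => simp
  | cons a l ih => simp [ih]; ring

lemma list_sum_map_mul_left {α : Type*} (l : List α) (c : ℝ) (f : α → ℝ) :
    (l.map (fun a => c * f a)).sum = c * (l.map f).sum := by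
  induction l with
  | nil => simp
  | cons a l ih => simp [ih]; ring

lemma list_map_sum_eq_finsum {α : Type*} (l : List α) (g : α → ℝ) :
    (l.map g).sum = ∑ i : Fin l.length, g (l.get i) := by
  induction l with
  | nil => simp
  | cons a l ih =>
    rw [List.map_cons, List.sum_cons, ih]
    exact (Fin.sum_univ_succ (f := fun i : Fin (l.length + 1) => g ((a :: l).get i))).symm

lemma normSeq_zero_def (x : ℕ →₀ ℝ) : normSeq Sa Sadm 0 x = famNorm Sa x := rfl

lemma normSeq_succ_def (n : ℕ) (x : ℕ →₀ ℝ) :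
    normSeq Sa Sadm (n + 1) x =
      max (normSeq Sa Sadm n x)
        (sSup {r : ℝ | ∃ l : List (Finset ℕ), IsAdmissible Sadm l ∧
          r = (1 / 2) * ((l.map fun E => normSeq Sa Sadm n (restr E x)).sum)}) := rfl

lemma halfsum_le_l1 {n : ℕ} (hle : ∀ y : ℕ →₀ ℝ, normSeq Sa Sadm n y ≤ l1 y)
    (x : ℕ →₀ ℝ) {l : List (Finset ℕ)} (hadm : IsAdmissible Sadm l) :
    (1 / 2 : ℝ) * ((l.map fun E => normSeq Sa Sadm n (restr E x)).sum) ≤ l1 x := by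
  have hdisj : l.Pairwise (fun E F => Disjoint E F) :=
    (chain'_pairwise hadm.1 hadm.2.1).imp (fun h => finLT_disjoint h)
  have h1 : ((l.map fun E => normSeq Sa Sadm n (restr E x)).sum) ≤
      (l.map (fun E => l1 (restr E x))).sum :=
    List.sum_le_sum (fun E _ => hle _)
  have h2 : (l.map (fun E => l1 (restr E x))).sum ≤ l1 x := by
    have h3 : (l.map (fun E => l1 (restr E x))) =
        ((l.map (fun E => x.support ∩ E)).map (fun s => ∑ j ∈ s, |x j|)) := by
      rw [List.map_map]
      exact List.map_congr_left (fun E _ => by rw [Function.comp_apply, l1_restr])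
    rw [h3]
    refine sum_sum_le (fun j => abs_nonneg _) _ x.support ?_ ?_
    · rw [List.pairwise_map]
      refine hdisj.imp ?_
      intro E F h
      exact h.mono Finset.inter_subset_right Finset.inter_subset_right
    · intro s hs
      rw [List.mem_map] at hs
      obtain ⟨E, _, rfl⟩ := hs
      exact Finset.inter_subset_left
  have h4 : (0:ℝ) ≤ (l.map (fun E => l1 (restr E x))).sum := by
    have : ∀ r ∈ l.map (fun E => l1 (restr E x)), 0 ≤ r := by
      intro r hr
      rw [List.mem_map] at hr
      obtain ⟨E, _, rfl⟩ := hr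
      exact l1_nonneg _
    exact List.sum_nonneg this
  nlinarith [l1_nonneg x]

lemma normSeq_le_l1 : ∀ (n : ℕ) (x : ℕ →₀ ℝ), normSeq Sa Sadm n x ≤ l1 x := by
  intro n
  induction n with
  | zero =>
    intro x
    exact famNorm_le (fun F _ => sigmaF_le_l1 F x) (l1_nonneg x)
  | succ n ih =>
    intro x
    rw [normSeq_succ_def]
    refine max_le (ih x) (Real.sSup_le ?_ (l1_nonneg x))
    rintro r ⟨l, hadm, rfl⟩
    exact halfsum_le_l1 ih x hadm

lemma normSet_bddAbove (n : ℕ) (x : ℕ →₀ ℝ) :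
    BddAbove {r : ℝ | ∃ l : List (Finset ℕ), IsAdmissible Sadm l ∧
      r = (1 / 2) * ((l.map fun E => normSeq Sa Sadm n (restr E x)).sum)} := by
  refine ⟨l1 x, ?_⟩
  rintro r ⟨l, hadm, rfl⟩
  exact halfsum_le_l1 (fun y => normSeq_le_l1 n y) x hadm

variable (hSa : ∅ ∈ Sa) (hSadm : ∅ ∈ Sadm)

include hSa in
lemma normSeq_nonneg : ∀ (n : ℕ) (x : ℕ →₀ ℝ), 0 ≤ normSeq Sa Sadm n x := by
  intro n
  induction n with
  | zero => intro x; exact famNorm_nonneg hSa x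
  | succ n ih =>
    intro x
    rw [normSeq_succ_def]
    exact le_trans (ih x) (le_max_left _ _)

lemma normSeq_mono_succ (n : ℕ) (x : ℕ →₀ ℝ) :
    normSeq Sa Sadm n x ≤ normSeq Sa Sadm (n + 1) x := by
  rw [normSeq_succ_def]; exact le_max_left _ _

lemma normSeq_mono {m n : ℕ} (h : m ≤ n) (x : ℕ →₀ ℝ) :
    normSeq Sa Sadm m x ≤ normSeq Sa Sadm n x := by
  induction n with
  | zero => rw [Nat.le_zero.mp h]
  | succ n ih =>
    rcases Nat.lt_or_ge m (n+1) with h' | h'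
    · exact le_trans (ih (Nat.lt_succ_iff.mp h')) (normSeq_mono_succ n x)
    · rw [le_antisymm h h']

lemma normSeq_le_tnorm (n : ℕ) (x : ℕ →₀ ℝ) :
    normSeq Sa Sadm n x ≤ tnorm Sa Sadm x := by
  have hb : BddAbove (Set.range fun m => normSeq Sa Sadm m x) :=
    ⟨l1 x, by rintro r ⟨m, rfl⟩; exact normSeq_le_l1 m x⟩
  exact le_ciSup hb n

lemma tnorm_le {x : ℕ →₀ ℝ} {C : ℝ} (h : ∀ n, normSeq Sa Sadm n x ≤ C) :
    tnorm Sa Sadm x ≤ C := ciSup_le h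

lemma half_sum_le_normSeq_succ (n : ℕ) (x : ℕ →₀ ℝ) {l : List (Finset ℕ)}
    (hadm : IsAdmissible Sadm l) :
    (1 / 2 : ℝ) * ((l.map fun E => normSeq Sa Sadm n (restr E x)).sum) ≤
      normSeq Sa Sadm (n + 1) x := by
  rw [normSeq_succ_def]
  exact le_trans (le_csSup (normSet_bddAbove n x) ⟨l, hadm, rfl⟩) (le_max_right _ _)

include hSa in
lemma normSeq_mono_ptwise : ∀ (n : ℕ) (u v : ℕ →₀ ℝ), (∀ j, |u j| ≤ |v j|) →
    normSeq Sa Sadm n u ≤ normSeq Sa Sadm n v := by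
  intro n
  induction n with
  | zero =>
    intro u v h
    refine famNorm_le (fun F hF => ?_) (famNorm_nonneg hSa v)
    exact le_trans (Finset.sum_le_sum (fun j _ => h j)) (le_famNorm hF v)
  | succ n ih =>
    intro u v h
    rw [normSeq_succ_def, normSeq_succ_def]
    refine max_le (le_trans (ih u v h) (le_max_left _ _)) ?_
    refine Real.sSup_le ?_ (le_trans (normSeq_nonneg hSa n v) (le_max_left _ _))
    rintro r ⟨l, hadm, rfl⟩
    have h1 : ((l.map fun E => normSeq Sa Sadm n (restr E u)).sum) ≤
        ((l.map fun E => normSeq Sa Sadm n (restr E v)).sum) := by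
      refine List.sum_le_sum (fun E _ => ih _ _ ?_)
      intro j
      rw [restr_apply, restr_apply]
      split
      · exact h j
      · simp
    refine le_trans (by linarith) (le_trans
      (le_csSup (normSet_bddAbove n v) ⟨l, hadm, rfl⟩) (le_max_right _ _))

include hSa in
lemma normSeq_restr_le (n : ℕ) (E : Finset ℕ) (x : ℕ →₀ ℝ) :
    normSeq Sa Sadm n (restr E x) ≤ normSeq Sa Sadm n x :=
  normSeq_mono_ptwise hSa n _ _ (fun j => abs_restr_apply_le E x j)

include hSa hSadm in
lemma normSeq_zero_fn : ∀ n : ℕ, normSeq Sa Sadm n (0 : ℕ →₀ ℝ) = 0 := by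
  intro n
  induction n with
  | zero =>
    refine le_antisymm (famNorm_le (fun F _ => ?_) (le_refl 0)) (famNorm_nonneg hSa 0)
    simp [sigmaF]
  | succ n ih =>
    rw [normSeq_succ_def, ih]
    have h1 : sSup {r : ℝ | ∃ l : List (Finset ℕ), IsAdmissible Sadm l ∧
        r = (1 / 2) * ((l.map fun E => normSeq Sa Sadm n (restr E (0:ℕ→₀ℝ))).sum)} = 0 := by
      apply le_antisymm
      · refine Real.sSup_le ?_ (le_refl 0)
        rintro r ⟨l, hadm, rfl⟩
        have : ∀ E ∈ l, normSeq Sa Sadm n (restr E (0:ℕ→₀ℝ)) = 0 := by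
          intro E _
          rw [restr_zero, ih]
        have h2 : (l.map fun E => normSeq Sa Sadm n (restr E (0:ℕ→₀ℝ))).sum = 0 := by
          rw [List.sum_eq_zero]
          intro r hr
          rw [List.mem_map] at hr
          obtain ⟨E, hE, rfl⟩ := hr
          exact this E hE
        rw [h2]; norm_num
      · refine le_csSup (normSet_bddAbove n 0) ⟨[], ?_, by simp⟩
        exact ⟨by simp, List.isChain_nil, by simpa using hSadm⟩
    rw [h1]
    simp

include hSa in
lemma normSeq_add_le : ∀ (n : ℕ) (u v : ℕ →₀ ℝ),
    normSeq Sa Sadm n (u + v) ≤ normSeq Sa Sadm n u + normSeq Sa Sadm n v := by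
  intro n
  induction n with
  | zero =>
    intro u v
    refine famNorm_le (fun F hF => ?_)
      (add_nonneg (famNorm_nonneg hSa u) (famNorm_nonneg hSa v))
    have h1 : sigmaF F (u + v) ≤ sigmaF F u + sigmaF F v := by
      rw [sigmaF, sigmaF, sigmaF, ← Finset.sum_add_distrib]
      refine Finset.sum_le_sum (fun j _ => ?_)
      rw [Finsupp.add_apply]
      exact abs_add_le _ _
    exact le_trans h1 (add_le_add (le_famNorm hF u) (le_famNorm hF v))
  | succ n ih =>
    intro u v
    rw [normSeq_succ_def, normSeq_succ_def, normSeq_succ_def]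
    refine max_le (le_trans (ih u v) (add_le_add (le_max_left _ _) (le_max_left _ _))) ?_
    refine Real.sSup_le ?_ (add_nonneg
      (le_trans (normSeq_nonneg hSa n u) (le_max_left _ _))
      (le_trans (normSeq_nonneg hSa n v) (le_max_left _ _)))
    rintro r ⟨l, hadm, rfl⟩
    have h1 : ((l.map fun E => normSeq Sa Sadm n (restr E (u + v))).sum) ≤
        ((l.map fun E => normSeq Sa Sadm n (restr E u)).sum) +
        ((l.map fun E => normSeq Sa Sadm n (restr E v)).sum) := by
      rw [← list_sum_map_add]
      refine List.sum_le_sum (fun E _ => ?_)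
      rw [restr_add]
      exact ih _ _
    have h2 := le_csSup (normSet_bddAbove (Sa := Sa) n u) ⟨l, hadm, rfl⟩
    have h3 := le_csSup (normSet_bddAbove (Sa := Sa) n v) ⟨l, hadm, rfl⟩
    have h4 := le_max_right (normSeq Sa Sadm n u) (sSup {r : ℝ | ∃ l : List (Finset ℕ),
      IsAdmissible Sadm l ∧
      r = (1 / 2) * ((l.map fun E => normSeq Sa Sadm n (restr E u)).sum)})
    have h5 := le_max_right (normSeq Sa Sadm n v) (sSup {r : ℝ | ∃ l : List (Finset ℕ),
      IsAdmissible Sadm l ∧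
      r = (1 / 2) * ((l.map fun E => normSeq Sa Sadm n (restr E v)).sum)})
    linarith

include hSa in
lemma normSeq_smul_le : ∀ (n : ℕ) (c : ℝ) (u : ℕ →₀ ℝ),
    normSeq Sa Sadm n (c • u) ≤ |c| * normSeq Sa Sadm n u := by
  intro n
  induction n with
  | zero =>
    intro c u
    refine famNorm_le (fun F hF => ?_)
      (mul_nonneg (abs_nonneg c) (famNorm_nonneg hSa u))
    have h1 : sigmaF F (c • u) = |c| * sigmaF F u := by
      rw [sigmaF, sigmaF, Finset.mul_sum]
      refine Finset.sum_congr rfl (fun j _ => ?_)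
      rw [Finsupp.smul_apply, _root_.smul_eq_mul, abs_mul]
    rw [h1]
    exact mul_le_mul_of_nonneg_left (le_famNorm hF u) (abs_nonneg c)
  | succ n ih =>
    intro c u
    rw [normSeq_succ_def, normSeq_succ_def]
    refine max_le (le_trans (ih c u)
      (mul_le_mul_of_nonneg_left (le_max_left _ _) (abs_nonneg c))) ?_
    refine Real.sSup_le ?_ (mul_nonneg (abs_nonneg c)
      (le_trans (normSeq_nonneg hSa n u) (le_max_left _ _)))
    rintro r ⟨l, hadm, rfl⟩
    have h1 : ((l.map fun E => normSeq Sa Sadm n (restr E (c • u))).sum) ≤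
        |c| * ((l.map fun E => normSeq Sa Sadm n (restr E u)).sum) := by
      rw [← list_sum_map_mul_left]
      refine List.sum_le_sum (fun E _ => ?_)
      rw [restr_smul]
      exact ih _ _
    have h2 := le_csSup (normSet_bddAbove (Sa := Sa) n u) ⟨l, hadm, rfl⟩
    have h3 := le_max_right (normSeq Sa Sadm n u) (sSup {r : ℝ | ∃ l : List (Finset ℕ),
      IsAdmissible Sadm l ∧
      r = (1 / 2) * ((l.map fun E => normSeq Sa Sadm n (restr E u)).sum)})
    have habs : (0:ℝ) ≤ |c| := abs_nonneg c
    nlinarith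

include hSa hSadm in
lemma normSeq_finsum_le {ι : Type*} (n : ℕ) (S : Finset ι) (f : ι → ℕ →₀ ℝ) :
    normSeq Sa Sadm n (∑ k ∈ S, f k) ≤ ∑ k ∈ S, normSeq Sa Sadm n (f k) := by
  classical
  induction S using Finset.induction_on with
  | empty => simp [normSeq_zero_fn hSa hSadm n]
  | @insert a s hne ih =>
    rw [Finset.sum_insert hne, Finset.sum_insert hne]
    exact le_trans (normSeq_add_le hSa n _ _) (by linarith [ih])

include hSa hSadm in
lemma exists_meet {x : ℕ →₀ ℝ} (hne : tnorm Sa Sadm x ≠ 0) :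
    ∃ F ∈ Sa, (F ∩ x.support).Nonempty := by
  by_contra hcon
  push_neg at hcon
  have hcon' : ∀ F ∈ Sa, ∀ j ∈ F, j ∉ x.support := by
    intro F hF j hjF hjs
    exact Finset.nonempty_iff_ne_empty.mp ⟨j, Finset.mem_inter.mpr ⟨hjF, hjs⟩⟩ (hcon F hF)
  have key : ∀ (n : ℕ) (u : ℕ →₀ ℝ), u.support ⊆ x.support → normSeq Sa Sadm n u = 0 := by
    intro n
    induction n with
    | zero =>
      intro u hu
      refine le_antisymm (famNorm_le (fun F hF => ?_) (le_refl 0)) (famNorm_nonneg hSa u)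
      rw [sigmaF]
      refine le_of_eq (Finset.sum_eq_zero (fun j hj => ?_))
      rcases eq_or_ne (u j) 0 with h | h
      · simp [h]
      · exact absurd (hu (Finsupp.mem_support_iff.mpr h)) (hcon' F hF j hj)
    | succ n ih =>
      intro u hu
      rw [normSeq_succ_def, ih u hu]
      have h1 : sSup {r : ℝ | ∃ l : List (Finset ℕ), IsAdmissible Sadm l ∧
          r = (1 / 2) * ((l.map fun E => normSeq Sa Sadm n (restr E u)).sum)} = 0 := by
        apply le_antisymm
        · refine Real.sSup_le ?_ (le_refl 0)
          rintro r ⟨l, hadm, rfl⟩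
          have h2 : (l.map fun E => normSeq Sa Sadm n (restr E u)).sum = 0 := by
            rw [List.sum_eq_zero]
            intro r hr
            rw [List.mem_map] at hr
            obtain ⟨E, hE, rfl⟩ := hr
            refine ih _ (le_trans ?_ hu)
            intro j hj
            rw [restr, Finsupp.support_filter, Finset.mem_filter] at hj
            exact hj.1
          rw [h2]; norm_num
        · refine le_csSup (normSet_bddAbove n u) ⟨[], ?_, by simp⟩
          exact ⟨by simp, List.isChain_nil, by simpa using hSadm⟩
      rw [h1]
      simp
  have : tnorm Sa Sadm x = 0 := by
    rw [tnorm]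
    have : ∀ n : ℕ, normSeq Sa Sadm n x = 0 := fun n => key n x (le_refl _)
    simp only [this]
    exact ciSup_const
  exact hne this

end NormSec
/-! ### Section H : the main lemma -/

lemma fib_le_one_of_strict {V : Finset ℕ} {ψ : ℕ → ℕ}
    (h : ∀ v ∈ V, ∀ w ∈ V, v < w → ψ v < ψ w) :
    ∀ μ : ℕ, (V.filter (fun v => ψ v = μ)).card ≤ 1 := by
  classical
  intro μ
  by_contra hc
  push_neg at hc
  rw [Finset.one_lt_card] at hc
  obtain ⟨u, hu, v, hv, huv⟩ := hc
  have hu' := Finset.mem_filter.mp hu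
  have hv' := Finset.mem_filter.mp hv
  rcases lt_or_gt_of_ne huv with h' | h'
  · have := h u hu'.1 v hv'.1 h'
    omega
  · have := h v hv'.1 u hu'.1 h'
    omega

lemma flatten_map_sum {α : Type*} : ∀ (L : List (List α)) (g : α → ℝ),
    (L.flatten.map g).sum = (L.map (fun li => (li.map g).sum)).sum := by
  intro L g
  induction L with
  | nil => simp
  | cons li L ih =>
    rw [List.flatten_cons, List.map_append, List.sum_append, ih, List.map_cons,
      List.sum_cons]

section Main

variable {seq : Ordinal.{0} → ℕ → Ordinal.{0}}

lemma key (hseq : IsCtblLadder seq) {a b : Ordinal.{0}}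
    (ha : a.card ≤ Cardinal.aleph0) (hb : b.card ≤ Cardinal.aleph0)
    {p : ℕ} (x : Fin p → (ℕ →₀ ℝ))
    (hx0 : ∀ k, x k ≠ 0)
    (hblock : ∀ k l : Fin p, k < l → finLT (x k).support (x l).support)
    (hnorm : ∀ k, tnorm (schreier seq a) (schreier seq b) (x k) = 1)
    (c : Fin p → ℝ) :
    ∀ (n : ℕ) (S : Finset (Fin p)),
      normSeq (schreier seq a) (schreier seq b) n (∑ k ∈ S, c k • x k) ≤
      2 * normSeq (schreier seq a) (sqFam (schreier seq b)) n
        (∑ k ∈ S, c k • Finsupp.single ((x k).support.sup id) (1 : ℝ)) := by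
  classical
  set 𝒜 := schreier seq a with h𝒜
  set ℬ := schreier seq b with hℬ
  set ℬ2 := sqFam ℬ with hℬ2
  have hemA : ∅ ∈ 𝒜 := empty_mem_schreier hseq ha
  have hemB : ∅ ∈ ℬ := empty_mem_schreier hseq hb
  have hemB2 : ∅ ∈ ℬ2 := by
    refine ⟨∅, hemB, ∅, hemB, ?_, by simp⟩
    intro a' ha' b' hb'
    exact absurd hb' (Finset.notMem_empty _)
  set ik : Fin p → ℕ := fun k => (x k).support.sup id with hik
  have hsuppne : ∀ k, (x k).support.Nonempty :=
    fun k => Finsupp.support_nonempty_iff.mpr (hx0 k)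
  have hik_mem : ∀ k, ik k ∈ (x k).support := by
    intro k
    have h1 : (x k).support.max' (hsuppne k) = (x k).support.sup id := by
      rw [Finset.max'_eq_sup', Finset.sup'_eq_sup]
    have h2 := Finset.max'_mem _ (hsuppne k)
    rw [h1] at h2
    exact h2
  have hik_ge : ∀ k, ∀ j ∈ (x k).support, j ≤ ik k :=
    fun k j hj => Finset.le_sup (f := id) hj
  have hik_mono : StrictMono ik := by
    intro k l hkl
    exact hblock k l hkl (ik k) (hik_mem k) (ik l) (hik_mem l)
  have hik_inj : Function.Injective ik := hik_mono.injective
  -- each singleton {ik k} is in 𝒜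
  have hsing : ∀ k, ({ik k} : Finset ℕ) ∈ 𝒜 := by
    intro k
    have h1 : tnorm 𝒜 ℬ (x k) ≠ 0 := by rw [hnorm k]; norm_num
    obtain ⟨F, hF, hFne⟩ := exists_meet hemA hemB h1
    refine split1 hseq ha (M := F) (V := {ik k})
      (ψ := fun _ => minOf (F ∩ (x k).support)) hF ?_ ?_ ?_ ?_
    · intro v _
      exact (Finset.mem_inter.mp (minOf_mem hFne)).1
    · intro v hv
      rw [Finset.mem_singleton] at hv
      subst hv
      exact hik_ge k _ (Finset.mem_inter.mp (minOf_mem hFne)).2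
    · intro v _ w _ _
      exact le_refl _
    · intro μ
      refine le_trans (Finset.card_le_card (Finset.filter_subset _ _)) ?_
      simp
  -- restriction of y-vectors
  have hrestr_y : ∀ (S T : Finset (Fin p)), T ⊆ S →
      restr (T.image ik) (∑ k ∈ S, c k • Finsupp.single (ik k) (1:ℝ)) =
        ∑ k ∈ T, c k • Finsupp.single (ik k) (1:ℝ) := by
    intro S T hTS
    rw [restr_sum]
    have h1 : ∀ k ∈ S, restr (T.image ik) (c k • Finsupp.single (ik k) (1:ℝ)) =
        if k ∈ T then c k • Finsupp.single (ik k) (1:ℝ) else 0 := by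
      intro k _
      rw [restr_smul, restr_single]
      by_cases hkT : k ∈ T
      · rw [if_pos (Finset.mem_image_of_mem ik hkT), if_pos hkT]
      · rw [if_neg, if_neg hkT, smul_zero]
        intro hc
        obtain ⟨k', hk', hkk'⟩ := Finset.mem_image.mp hc
        exact hkT ((hik_inj hkk') ▸ hk')
    rw [Finset.sum_congr rfl h1, Finset.sum_ite_mem, Finset.inter_eq_right.mpr hTS]
  -- value of y at ik k
  have hyval : ∀ (S : Finset (Fin p)), ∀ k ∈ S,
      (∑ k' ∈ S, c k' • Finsupp.single (ik k') (1:ℝ)) (ik k) = c k := by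
    intro S k hk
    rw [Finsupp.finset_sum_apply]
    rw [Finset.sum_eq_single k]
    · rw [Finsupp.smul_apply, Finsupp.single_apply, if_pos rfl, _root_.smul_eq_mul, mul_one]
    · intro k' _ hk'
      rw [Finsupp.smul_apply, Finsupp.single_apply, if_neg (fun h => hk' (hik_inj h)),
        smul_zero]
    · intro h
      exact absurd hk h
  -- |c k| is dominated by the y-norm of the singleton restriction
  have habs_le : ∀ (n : ℕ) (S : Finset (Fin p)), ∀ k ∈ S,
      |c k| ≤ normSeq 𝒜 ℬ2 n (restr ({ik k} : Finset ℕ)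
        (∑ k' ∈ S, c k' • Finsupp.single (ik k') (1:ℝ))) := by
    intro n S k hk
    have h1 : restr ({ik k} : Finset ℕ) (∑ k' ∈ S, c k' • Finsupp.single (ik k') (1:ℝ)) =
        c k • Finsupp.single (ik k) (1:ℝ) := by
      have h2 := hrestr_y S {k} (Finset.singleton_subset_iff.mpr hk)
      rw [Finset.image_singleton] at h2
      rw [h2, Finset.sum_singleton]
    rw [h1]
    have h3 : sigmaF ({ik k} : Finset ℕ) (c k • Finsupp.single (ik k) (1:ℝ)) = |c k| := by
      rw [sigmaF, Finset.sum_singleton, Finsupp.smul_apply, Finsupp.single_apply,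
        if_pos rfl, _root_.smul_eq_mul, mul_one]
    calc |c k| = sigmaF ({ik k} : Finset ℕ) (c k • Finsupp.single (ik k) (1:ℝ)) := h3.symm
      _ ≤ famNorm 𝒜 (c k • Finsupp.single (ik k) (1:ℝ)) := le_famNorm (hsing k) _
      _ = normSeq 𝒜 ℬ2 0 (c k • Finsupp.single (ik k) (1:ℝ)) := rfl
      _ ≤ normSeq 𝒜 ℬ2 n (c k • Finsupp.single (ik k) (1:ℝ)) := normSeq_mono (Nat.zero_le n) _
  intro n
  induction n with
  | zero =>
    intro S
    rw [normSeq_zero_def, normSeq_zero_def]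
    refine famNorm_le (fun F hF => ?_)
      (by nlinarith [famNorm_nonneg hemA (∑ k ∈ S, c k • Finsupp.single (ik k) (1:ℝ))])
    set K := S.filter (fun k => (F ∩ (x k).support).Nonempty) with hK
    have h1 : sigmaF F (∑ k ∈ S, c k • x k) ≤ ∑ k ∈ K, |c k| := by
      have h2 : sigmaF F (∑ k ∈ S, c k • x k) ≤
          ∑ k ∈ S, |c k| * sigmaF F (x k) := by
        rw [sigmaF]
        calc ∑ j ∈ F, |(∑ k ∈ S, c k • x k) j|
            ≤ ∑ j ∈ F, ∑ k ∈ S, |c k| * |x k j| := by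
              refine Finset.sum_le_sum (fun j _ => ?_)
              rw [Finsupp.finset_sum_apply]
              refine le_trans (Finset.abs_sum_le_sum_abs _ _) ?_
              refine le_of_eq (Finset.sum_congr rfl (fun k _ => ?_))
              rw [Finsupp.smul_apply, _root_.smul_eq_mul, abs_mul]
          _ = ∑ k ∈ S, |c k| * sigmaF F (x k) := by
              rw [Finset.sum_comm]
              refine Finset.sum_congr rfl (fun k _ => ?_)
              rw [sigmaF, Finset.mul_sum]
      refine le_trans h2 ?_
      have h3 : ∀ k ∈ S, |c k| * sigmaF F (x k) ≤ if k ∈ K then |c k| else 0 := by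
        intro k hk
        by_cases hkK : k ∈ K
        · rw [if_pos hkK]
          have hσ : sigmaF F (x k) ≤ 1 := by
            refine le_trans (le_famNorm hF (x k)) ?_
            rw [← normSeq_zero_def (Sadm := ℬ)]
            exact le_trans (normSeq_le_tnorm 0 (x k)) (le_of_eq (hnorm k))
          nlinarith [abs_nonneg (c k), sigmaF_nonneg F (x k)]
        · rw [if_neg hkK]
          have hσ0 : sigmaF F (x k) = 0 := by
            rw [sigmaF]
            refine Finset.sum_eq_zero (fun j hj => ?_)
            by_contra hne
            have hj2 : j ∈ (x k).support := by
              rw [Finsupp.mem_support_iff]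
              intro h
              exact hne (by rw [h]; simp)
            exact hkK (Finset.mem_filter.mpr ⟨hk, ⟨j, Finset.mem_inter.mpr ⟨hj, hj2⟩⟩⟩)
          rw [hσ0, mul_zero]
      refine le_trans (Finset.sum_le_sum h3) ?_
      rw [Finset.sum_ite_mem, Finset.inter_eq_right.mpr (Finset.filter_subset _ _)]
    have h4 : ∑ k ∈ K, |c k| =
        sigmaF (K.image ik) (∑ k ∈ S, c k • Finsupp.single (ik k) (1:ℝ)) := by
      rw [sigmaF, Finset.sum_image (fun k _ k' _ h => hik_inj h)]
      refine Finset.sum_congr rfl (fun k hk => ?_)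
      rw [hyval S k (Finset.mem_of_mem_filter _ hk)]
    have h5 : (K.image ik) ∈ 𝒜 := by
      set ψ : ℕ → ℕ := fun v => if h : ∃ k, k ∈ K ∧ ik k = v then
        minOf (F ∩ (x h.choose).support) else 0 with hψ
      have hψdef : ∀ k ∈ K, ψ (ik k) = minOf (F ∩ (x k).support) := by
        intro k hk
        have hex : ∃ k', k' ∈ K ∧ ik k' = ik k := ⟨k, hk, rfl⟩
        rw [hψ]
        simp only [dif_pos hex]
        have : hex.choose = k := hik_inj hex.choose_spec.2
        rw [this]
      have hKint : ∀ k ∈ K, (F ∩ (x k).support).Nonempty :=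
        fun k hk => (Finset.mem_filter.mp hk).2
      refine split1 hseq ha (M := F) (V := K.image ik) (ψ := ψ) hF ?_ ?_ ?_ ?_
      · intro v hv
        obtain ⟨k, hk, rfl⟩ := Finset.mem_image.mp hv
        rw [hψdef k hk]
        exact (Finset.mem_inter.mp (minOf_mem (hKint k hk))).1
      · intro v hv
        obtain ⟨k, hk, rfl⟩ := Finset.mem_image.mp hv
        rw [hψdef k hk]
        exact hik_ge k _ (Finset.mem_inter.mp (minOf_mem (hKint k hk))).2
      · intro v hv w hw hvw
        obtain ⟨k, hk, rfl⟩ := Finset.mem_image.mp hv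
        obtain ⟨k', hk', rfl⟩ := Finset.mem_image.mp hw
        rw [hψdef k hk, hψdef k' hk']
        have hkk' : k ≤ k' := by
          by_contra hcon
          push_neg at hcon
          exact absurd hvw (not_le.mpr (hik_mono hcon))
        rcases eq_or_lt_of_le hkk' with rfl | hlt
        · exact le_refl _
        · exact le_of_lt (hblock k k' hlt _
            (Finset.mem_inter.mp (minOf_mem (hKint k hk))).2 _
            (Finset.mem_inter.mp (minOf_mem (hKint k' hk'))).2)
      · refine fib_le_one_of_strict ?_
        intro v hv w hw hvw
        obtain ⟨k, hk, rfl⟩ := Finset.mem_image.mp hv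
        obtain ⟨k', hk', rfl⟩ := Finset.mem_image.mp hw
        rw [hψdef k hk, hψdef k' hk']
        have hlt : k < k' := by
          by_contra hcon
          push_neg at hcon
          rcases eq_or_lt_of_le hcon with rfl | h
          · exact lt_irrefl _ hvw
          · exact absurd hvw (not_lt.mpr (le_of_lt (hik_mono h)))
        exact hblock k k' hlt _
          (Finset.mem_inter.mp (minOf_mem (hKint k hk))).2 _
          (Finset.mem_inter.mp (minOf_mem (hKint k' hk'))).2
    have h6 : sigmaF (K.image ik) (∑ k ∈ S, c k • Finsupp.single (ik k) (1:ℝ)) ≤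
        famNorm 𝒜 (∑ k ∈ S, c k • Finsupp.single (ik k) (1:ℝ)) := le_famNorm h5 _
    have h7 := famNorm_nonneg hemA (∑ k ∈ S, c k • Finsupp.single (ik k) (1:ℝ))
    linarith
  | succ n IH =>
    intro S
    rw [normSeq_succ_def]
    refine max_le ?_ ?_
    · refine le_trans (IH S) ?_
      have := normSeq_mono_succ (Sa := 𝒜) (Sadm := ℬ2) n
        (∑ k ∈ S, c k • Finsupp.single (ik k) (1:ℝ))
      linarith
    · have hnn := normSeq_nonneg (Sadm := ℬ2) hemA (n+1)
        (∑ k ∈ S, c k • Finsupp.single (ik k) (1:ℝ))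
      refine Real.sSup_le ?_ (by linarith)
      rintro r ⟨l, hadm, rfl⟩
      set zS := ∑ k ∈ S, c k • x k with hzS
      set yS := ∑ k ∈ S, c k • Finsupp.single (ik k) (1:ℝ) with hyS
      rcases S.eq_empty_or_nonempty with rfl | hSne
      · have hz0 : zS = 0 := by rw [hzS]; simp
        have h1 : (l.map fun E => normSeq 𝒜 ℬ n (restr E zS)).sum = 0 := by
          refine List.sum_eq_zero ?_
          intro r hr
          rw [List.mem_map] at hr
          obtain ⟨E, _, rfl⟩ := hr
          rw [hz0, restr_zero, normSeq_zero_fn hemA hemB]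
        rw [h1]
        norm_num
        linarith
      · obtain ⟨d0, hd0⟩ := hSne
        have hpg := List.pairwise_iff_get.mp (chain'_pairwise hadm.1 hadm.2.1)
        have hget : ∀ i : Fin l.length, l.get i ∈ l := by
          intro i
          have h := List.get_mem l i
          simpa using h
        set Ki : Fin l.length → Finset (Fin p) :=
          fun i => S.filter (fun k => ((l.get i) ∩ (x k).support).Nonempty) with hKi
        have hKimem : ∀ (i) (k : Fin p), k ∈ Ki i ↔
            k ∈ S ∧ ((l.get i) ∩ (x k).support).Nonempty := by
          intro i k; rw [hKi]; exact Finset.mem_filter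
        have hKsub : ∀ i, Ki i ⊆ S := by
          intro i k hk; exact ((hKimem i k).mp hk).1
        set Mi : Fin l.length → Fin p :=
          fun i => if h : (Ki i).Nonempty then (Ki i).max' h else d0 with hMi
        have hMi_def : ∀ (i) (h : (Ki i).Nonempty), Mi i = (Ki i).max' h := by
          intro i h; rw [hMi]; exact dif_pos h
        have hMi_mem : ∀ (i), (Ki i).Nonempty → Mi i ∈ Ki i := by
          intro i h; rw [hMi_def i h]; exact Finset.max'_mem _ h
        have hMi_max : ∀ (i), ∀ k ∈ Ki i, k ≤ Mi i := by
          intro i k hk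
          rw [hMi_def i ⟨k, hk⟩]
          exact Finset.le_max' _ k hk
        set MaxHit : Fin p → Prop := fun k => ∃ i, (Ki i).Nonempty ∧ Mi i = k with hMaxHit
        set Mid : Fin l.length → Finset (Fin p) :=
          fun i => (Ki i).filter (fun k => ¬ MaxHit k) with hMid
        have hMidmem : ∀ (i) (k : Fin p), k ∈ Mid i ↔ k ∈ Ki i ∧ ¬ MaxHit k := by
          intro i k; rw [hMid]; exact Finset.mem_filter
        have hMidsub : ∀ i, Mid i ⊆ Ki i := by
          intro i k hk; exact ((hMidmem i k).mp hk).1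
        set Fi : Fin l.length → Finset ℕ := fun i => (Mid i).image ik with hFi
        set fresh : Fin l.length → Prop :=
          fun i => (Ki i).Nonempty ∧ ∀ i', i' < i → ¬((Ki i').Nonempty ∧ Mi i' = Mi i)
          with hfresh
        set ent : Fin l.length → List (Finset ℕ) :=
          fun i => (if (Mid i).Nonempty then [Fi i] else []) ++
            (if fresh i then [({ik (Mi i)} : Finset ℕ)] else []) with hent
        set l' := (List.ofFn ent).flatten with hl'
        -- order facts
        have fact1 : ∀ i i' : Fin l.length, i < i' →
            ∀ k ∈ Ki i, ∀ k' ∈ Ki i', k ≤ k' := by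
          intro i i' hii' k hk k' hk'
          by_contra hc
          push_neg at hc
          obtain ⟨a', ha'⟩ := ((hKimem i k).mp hk).2
          obtain ⟨b', hb'⟩ := ((hKimem i' k').mp hk').2
          have hab : a' < b' := hpg i i' hii' a' (Finset.mem_inter.mp ha').1
            b' (Finset.mem_inter.mp hb').1
          have hba : b' < a' := hblock k' k hc b' (Finset.mem_inter.mp hb').2
            a' (Finset.mem_inter.mp ha').2
          omega
        have fact5 : ∀ i, ∀ k ∈ Mid i, k < Mi i := by
          intro i k hk
          have h1 : k ∈ Ki i := hMidsub i hk
          have h2 : k ≤ Mi i := hMi_max i k h1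
          have h3 : MaxHit (Mi i) := ⟨i, ⟨k, h1⟩, rfl⟩
          have h4 : ¬ MaxHit k := ((hMidmem i k).mp hk).2
          rcases eq_or_lt_of_le h2 with rfl | h
          · exact absurd h3 h4
          · exact h
        have fact6 : ∀ i i' : Fin l.length, i < i' → (Ki i).Nonempty →
            ∀ k' ∈ Mid i', Mi i < k' := by
          intro i i' hii' hne k' hk'
          have h1 : Mi i ≤ k' := fact1 i i' hii' _ (hMi_mem i hne) _ (hMidsub i' hk')
          rcases eq_or_lt_of_le h1 with h | h
          · exact absurd (h ▸ ⟨i, hne, rfl⟩ : MaxHit k') ((hMidmem i' k').mp hk').2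
          · exact h
        have fact7 : ∀ i i' : Fin l.length, i < i' → (Ki i).Nonempty → fresh i' →
            Mi i < Mi i' := by
          intro i i' hii' hne hf
          have h1 : Mi i ≤ Mi i' := fact1 i i' hii' _ (hMi_mem i hne) _ (hMi_mem i' hf.1)
          rcases eq_or_lt_of_le h1 with h | h
          · exact absurd ⟨hne, h⟩ (hf.2 i hii')
          · exact h
        -- entry description
        have entcase : ∀ (i) (D : Finset ℕ), D ∈ ent i →
            (D = Fi i ∧ (Mid i).Nonempty) ∨ (D = {ik (Mi i)} ∧ fresh i) := by
          intro i D hD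
          rw [hent] at hD
          rcases List.mem_append.mp hD with h | h
          · left
            by_cases h1 : (Mid i).Nonempty
            · rw [if_pos h1, List.mem_singleton] at h
              exact ⟨h, h1⟩
            · rw [if_neg h1] at h
              exact absurd h List.not_mem_nil
          · right
            by_cases h2 : fresh i
            · rw [if_pos h2, List.mem_singleton] at h
              exact ⟨h, h2⟩
            · rw [if_neg h2] at h
              exact absurd h List.not_mem_nil
        have entne : ∀ (i) (D : Finset ℕ), D ∈ ent i → D.Nonempty := by
          intro i D hD
          rcases entcase i D hD with ⟨rfl, h⟩ | ⟨rfl, _⟩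
          · rw [hFi]; exact h.image ik
          · exact ⟨_, Finset.mem_singleton_self _⟩
        have entKine : ∀ (i) (D : Finset ℕ), D ∈ ent i → (Ki i).Nonempty := by
          intro i D hD
          rcases entcase i D hD with ⟨_, h⟩ | ⟨_, hf⟩
          · obtain ⟨k, hk⟩ := h
            exact ⟨k, hMidsub i hk⟩
          · exact hf.1
        have entelem_le : ∀ (i) (D : Finset ℕ), D ∈ ent i → ∀ v ∈ D,
            ∃ k, k ∈ Ki i ∧ k ≤ Mi i ∧ ik k = v := by
          intro i D hD v hv
          rcases entcase i D hD with ⟨rfl, _⟩ | ⟨rfl, hf⟩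
          · rw [hFi] at hv
            obtain ⟨k, hk, rfl⟩ := Finset.mem_image.mp hv
            exact ⟨k, hMidsub i hk, le_of_lt (fact5 i k hk), rfl⟩
          · rw [Finset.mem_singleton] at hv
            exact ⟨Mi i, hMi_mem i hf.1, le_refl _, hv.symm⟩
        have entelem_gt : ∀ (i i' : Fin l.length), i < i' → (Ki i).Nonempty →
            ∀ (D : Finset ℕ), D ∈ ent i' → ∀ v ∈ D, ∃ k, Mi i < k ∧ ik k = v := by
          intro i i' hii' hne D hD v hv
          rcases entcase i' D hD with ⟨rfl, _⟩ | ⟨rfl, hf⟩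
          · rw [hFi] at hv
            obtain ⟨k, hk, rfl⟩ := Finset.mem_image.mp hv
            exact ⟨k, fact6 i i' hii' hne k hk, rfl⟩
          · rw [Finset.mem_singleton] at hv
            exact ⟨Mi i', fact7 i i' hii' hne hf, hv.symm⟩
        have hcrossent : ∀ i i' : Fin l.length, i < i' →
            ∀ D ∈ ent i, ∀ D' ∈ ent i', finLT D D' := by
          intro i i' hii' D hD D' hD' v hv w hw
          obtain ⟨k, _, hkle, rfl⟩ := entelem_le i D hD v hv
          obtain ⟨k', hk'gt, rfl⟩ := entelem_gt i i' hii' (entKine i D hD) D' hD' w hw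
          exact hik_mono (lt_of_le_of_lt hkle hk'gt)
        have hinner : ∀ i, (ent i).Pairwise finLT := by
          intro i
          simp only [hent]
          by_cases h1 : (Mid i).Nonempty
          · by_cases h2 : fresh i
            · rw [if_pos h1, if_pos h2, List.singleton_append]
              refine List.pairwise_cons.mpr ⟨?_, List.pairwise_singleton _ _⟩
              intro D hD
              rw [List.mem_singleton] at hD
              subst hD
              intro v hv w hw
              rw [hFi] at hv
              obtain ⟨k, hk, rfl⟩ := Finset.mem_image.mp hv
              rw [Finset.mem_singleton] at hw
              subst hw
              exact hik_mono (fact5 i k hk)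
            · rw [if_pos h1, if_neg h2, List.append_nil]
              exact List.pairwise_singleton _ _
          · by_cases h2 : fresh i
            · rw [if_neg h1, if_pos h2, List.nil_append]
              exact List.pairwise_singleton _ _
            · rw [if_neg h1, if_neg h2]
              exact List.Pairwise.nil
        have hl'pair : l'.Pairwise finLT := by
          rw [hl', List.pairwise_flatten]
          constructor
          · intro li hli
            rw [List.mem_ofFn] at hli
            obtain ⟨i, rfl⟩ := hli
            exact hinner i
          · rw [List.pairwise_ofFn]
            intro i j hij
            exact hcrossent i j hij
        have hl'mem : ∀ D ∈ l', ∃ i, D ∈ ent i := by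
          intro D hD
          rw [hl', List.mem_flatten] at hD
          obtain ⟨li, hli, hDli⟩ := hD
          rw [List.mem_ofFn] at hli
          obtain ⟨i, rfl⟩ := hli
          exact ⟨i, hDli⟩
        have hl'ne : ∀ D ∈ l', D.Nonempty := by
          intro D hD
          obtain ⟨i, hi⟩ := hl'mem D hD
          exact entne i D hi
        -- uniqueness of origin
        have huniqi : ∀ (i i' : Fin l.length) (D D' : Finset ℕ), D ∈ ent i → D' ∈ ent i' →
            minOf D = minOf D' → i = i' := by
          intro i i' D D' hD hD' hmin
          by_contra hne
          rcases lt_or_gt_of_ne hne with h | h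
          · have := hcrossent i i' h D hD D' hD' _ (minOf_mem (entne i D hD))
              _ (minOf_mem (entne i' D' hD'))
            omega
          · have := hcrossent i' i h D' hD' D hD _ (minOf_mem (entne i' D' hD'))
              _ (minOf_mem (entne i D hD))
            omega
        set ψ : ℕ → ℕ := fun v =>
          if h : ∃ i : Fin l.length, ∃ D ∈ ent i, minOf D = v then
            minOf (l.get h.choose) else 0 with hψ
        have hψspec : ∀ (i : Fin l.length) (D : Finset ℕ), D ∈ ent i →
            ψ (minOf D) = minOf (l.get i) := by
          intro i D hD
          have hex : ∃ i' : Fin l.length, ∃ D' ∈ ent i', minOf D' = minOf D :=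
            ⟨i, D, hD, rfl⟩
          rw [hψ]
          simp only [dif_pos hex]
          obtain ⟨D', hD', hmin'⟩ := hex.choose_spec
          rw [huniqi _ i D' D hD' hD hmin']
        have hVsrc : ∀ v ∈ (l'.map minOf).toFinset,
            ∃ i, ∃ D ∈ ent i, minOf D = v := by
          intro v hv
          rw [List.mem_toFinset, List.mem_map] at hv
          obtain ⟨D, hD, rfl⟩ := hv
          obtain ⟨i, hi⟩ := hl'mem D hD
          exact ⟨i, D, hi, rfl⟩
        have hminmono : ∀ (i i' : Fin l.length), i ≤ i' →
            minOf (l.get i) ≤ minOf (l.get i') := by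
          intro i i' hii'
          rcases eq_or_lt_of_le hii' with h | h
          · rw [h]
          · refine le_of_lt (minOf_lt_of_pairwise hadm.1
              (chain'_pairwise hadm.1 hadm.2.1) (hget i)
              (hget i') (hpg i i' h))
        have hVB2 : ((l'.map minOf).toFinset) ∈ ℬ2 := by
          refine split2 hseq hb (M := (l.map minOf).toFinset) (ψ := ψ)
            hadm.2.2 ?_ ?_ ?_ ?_
          · intro v hv
            obtain ⟨i, D, hD, rfl⟩ := hVsrc v hv
            rw [hψspec i D hD, List.mem_toFinset, List.mem_map]
            exact ⟨l.get i, hget i, rfl⟩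
          · intro v hv
            obtain ⟨i, D, hD, rfl⟩ := hVsrc v hv
            rw [hψspec i D hD]
            obtain ⟨k, hkKi, _, hkv⟩ := entelem_le i D hD _ (minOf_mem (entne i D hD))
            obtain ⟨a', ha'⟩ := ((hKimem i k).mp hkKi).2
            refine le_trans (minOf_le (Finset.mem_inter.mp ha').1) ?_
            rw [← hkv]
            exact hik_ge k a' (Finset.mem_inter.mp ha').2
          · intro v hv w hw hvw
            obtain ⟨i, D, hD, hDv⟩ := hVsrc v hv
            obtain ⟨i', D', hD', hD'w⟩ := hVsrc w hw
            rw [← hDv, ← hD'w, hψspec i D hD, hψspec i' D' hD']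
            refine hminmono i i' ?_
            by_contra hcon
            push_neg at hcon
            have := hcrossent i' i hcon D' hD' D hD _ (minOf_mem (entne i' D' hD'))
              _ (minOf_mem (entne i D hD))
            omega
          · intro μ
            rcases (((l'.map minOf).toFinset).filter (fun v => ψ v = μ)).eq_empty_or_nonempty
              with he | hne
            · rw [he]; simp
            · obtain ⟨v₀, hv₀⟩ := hne
              obtain ⟨i₀, D₀, hD₀, hD₀v⟩ := hVsrc v₀ (Finset.mem_filter.mp hv₀).1
              have hμ₀ : minOf (l.get i₀) = μ := by
                rw [← hψspec i₀ D₀ hD₀, hD₀v]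
                exact (Finset.mem_filter.mp hv₀).2
              have hsub : (((l'.map minOf).toFinset).filter (fun v => ψ v = μ)) ⊆
                  {minOf (Fi i₀), ik (Mi i₀)} := by
                intro v hv
                obtain ⟨i, D, hD, hDv⟩ := hVsrc v (Finset.mem_filter.mp hv).1
                have hμ : minOf (l.get i) = μ := by
                  rw [← hψspec i D hD, hDv]
                  exact (Finset.mem_filter.mp hv).2
                have hii₀ : i = i₀ := by
                  by_contra hne'
                  rcases lt_or_gt_of_ne hne' with h | h
                  · have := minOf_lt_of_pairwise hadm.1
                      (chain'_pairwise hadm.1 hadm.2.1) (hget i)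
                      (hget i₀) (hpg i i₀ h)
                    omega
                  · have := minOf_lt_of_pairwise hadm.1
                      (chain'_pairwise hadm.1 hadm.2.1) (hget i₀)
                      (hget i) (hpg i₀ i h)
                    omega
                subst hii₀
                rcases entcase i D hD with ⟨rfl, _⟩ | ⟨rfl, _⟩
                · rw [← hDv]; exact Finset.mem_insert_self _ _
                · rw [← hDv]
                  have : minOf ({ik (Mi i)} : Finset ℕ) = ik (Mi i) := by
                    apply le_antisymm (minOf_le (Finset.mem_singleton_self _))
                    have := minOf_mem (⟨_, Finset.mem_singleton_self _⟩ :
                      ({ik (Mi i)} : Finset ℕ).Nonempty)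
                    rw [Finset.mem_singleton] at this
                    omega
                  rw [this]
                  exact Finset.mem_insert.mpr (Or.inr (Finset.mem_singleton_self _))
              refine le_trans (Finset.card_le_card hsub) ?_
              refine le_trans (Finset.card_insert_le _ _) ?_
              simp
        have hadm' : IsAdmissible ℬ2 l' := ⟨hl'ne, hl'pair.isChain, hVB2⟩
        -- decomposition of restr E_i zS
        have hz : ∀ i : Fin l.length, restr (l.get i) zS =
            (∑ k ∈ (Ki i).filter MaxHit, c k • restr (l.get i) (x k)) +
            restr (l.get i) (∑ k ∈ Mid i, c k • x k) := by
          intro i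
          rw [hzS, restr_sum]
          have hsplit : ∑ k ∈ S, restr (l.get i) (c k • x k)
              = ∑ k ∈ Ki i, restr (l.get i) (c k • x k) := by
            refine (Finset.sum_subset (hKsub i) ?_).symm
            intro k hkS hkK
            refine restr_eq_zero ?_
            intro j hj hjE
            have hj' : j ∈ (x k).support := Finsupp.support_smul hj
            exact hkK ((hKimem i k).mpr ⟨hkS, ⟨j, Finset.mem_inter.mpr ⟨hjE, hj'⟩⟩⟩)
          rw [hsplit, ← Finset.sum_filter_add_sum_filter_not (Ki i) MaxHit]
          congr 1
          · exact Finset.sum_congr rfl (fun k _ => restr_smul _ _ _)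
          · rw [restr_sum]
        -- per-i estimate
        have hper : ∀ i : Fin l.length, normSeq 𝒜 ℬ n (restr (l.get i) zS) ≤
            (∑ k ∈ (Ki i).filter MaxHit, |c k| * normSeq 𝒜 ℬ n (restr (l.get i) (x k))) +
            2 * normSeq 𝒜 ℬ2 n (restr (Fi i) yS) := by
          intro i
          rw [hz i]
          refine le_trans (normSeq_add_le hemA n _ _) ?_
          have hA : normSeq 𝒜 ℬ n (∑ k ∈ (Ki i).filter MaxHit, c k • restr (l.get i) (x k)) ≤
              ∑ k ∈ (Ki i).filter MaxHit, |c k| * normSeq 𝒜 ℬ n (restr (l.get i) (x k)) :=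
            le_trans (normSeq_finsum_le hemA hemB n _ _)
              (Finset.sum_le_sum (fun k _ => normSeq_smul_le hemA n (c k) _))
          have hB3 : restr (Fi i) yS = ∑ k ∈ Mid i, c k • Finsupp.single (ik k) (1:ℝ) := by
            rw [hyS, hFi]
            exact hrestr_y S (Mid i) (Finset.Subset.trans (hMidsub i) (hKsub i))
          have hB : normSeq 𝒜 ℬ n (restr (l.get i) (∑ k ∈ Mid i, c k • x k)) ≤
              2 * normSeq 𝒜 ℬ2 n (restr (Fi i) yS) := by
            rw [hB3]
            exact le_trans (normSeq_restr_le hemA n _ _) (IH (Mid i))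
          linarith
        -- summations
        have hsum1 : (l.map fun E => normSeq 𝒜 ℬ n (restr E zS)).sum =
            ∑ i : Fin l.length, normSeq 𝒜 ℬ n (restr (l.get i) zS) :=
          list_map_sum_eq_finsum l _
        set Mh := S.filter MaxHit with hMh
        have hMhsub : Mh ⊆ S := Finset.filter_subset _ _
        have hsing_filter : ∀ i, (Ki i).filter MaxHit = Mh.filter (fun k => k ∈ Ki i) := by
          intro i
          ext k
          simp only [hMh, Finset.mem_filter]
          constructor
          · rintro ⟨h1, h2⟩
            exact ⟨⟨hKsub i h1, h2⟩, h1⟩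
          · rintro ⟨⟨_, h2⟩, h3⟩
            exact ⟨h3, h2⟩
        have hdouble : ∑ i : Fin l.length, ∑ k ∈ (Ki i).filter MaxHit,
              |c k| * normSeq 𝒜 ℬ n (restr (l.get i) (x k)) ≤
            ∑ k ∈ Mh, |c k| * ∑ i : Fin l.length,
              normSeq 𝒜 ℬ n (restr (l.get i) (x k)) := by
          have step1 : ∀ i : Fin l.length, ∑ k ∈ (Ki i).filter MaxHit,
              |c k| * normSeq 𝒜 ℬ n (restr (l.get i) (x k)) =
              ∑ k ∈ Mh, if k ∈ Ki i then
                |c k| * normSeq 𝒜 ℬ n (restr (l.get i) (x k)) else 0 := by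
            intro i
            rw [hsing_filter i, Finset.sum_filter]
          rw [Finset.sum_congr rfl (fun i _ => step1 i), Finset.sum_comm]
          refine Finset.sum_le_sum (fun k _ => ?_)
          rw [Finset.mul_sum]
          refine Finset.sum_le_sum (fun i _ => ?_)
          split
          · exact le_refl _
          · exact mul_nonneg (abs_nonneg _) (normSeq_nonneg hemA n _)
        have hrun : ∀ k, (1/2 : ℝ) * ∑ i : Fin l.length,
            normSeq 𝒜 ℬ n (restr (l.get i) (x k)) ≤ 1 := by
          intro k
          have h1 : (1/2 : ℝ) * ((l.map fun E => normSeq 𝒜 ℬ n (restr E (x k))).sum) ≤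
              normSeq 𝒜 ℬ (n+1) (x k) := half_sum_le_normSeq_succ n (x k) hadm
          rw [list_map_sum_eq_finsum] at h1
          exact le_trans h1 (le_trans (normSeq_le_tnorm (n+1) (x k)) (le_of_eq (hnorm k)))
        have hrun_nonneg : ∀ k, (0:ℝ) ≤ ∑ i : Fin l.length,
            normSeq 𝒜 ℬ n (restr (l.get i) (x k)) :=
          fun k => Finset.sum_nonneg (fun i _ => normSeq_nonneg hemA n _)
        -- the big-sum identity for l'
        set g' : Finset ℕ → ℝ := fun D => normSeq 𝒜 ℬ2 n (restr D yS) with hg'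
        have hTOT1 : (l'.map g').sum = ∑ i : Fin l.length, ((ent i).map g').sum := by
          rw [hl', flatten_map_sum, List.map_ofFn, List.sum_ofFn]
          rfl
        have hentm : ∀ i, ((ent i).map g').sum =
            (if (Mid i).Nonempty then g' (Fi i) else 0) +
            (if fresh i then g' ({ik (Mi i)} : Finset ℕ) else 0) := by
          intro i
          simp only [hent]
          by_cases h1 : (Mid i).Nonempty
          · by_cases h2 : fresh i
            · simp only [if_pos h1, if_pos h2]; simp
            · simp only [if_pos h1, if_neg h2]; simp
          · by_cases h2 : fresh i
            · simp only [if_neg h1, if_pos h2]; simp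
            · simp only [if_neg h1, if_neg h2]; simp
        have hFzero : ∀ i, ¬ (Mid i).Nonempty → g' (Fi i) = 0 := by
          intro i h
          have h1 : Mid i = ∅ := Finset.not_nonempty_iff_eq_empty.mp h
          rw [hg', hFi]
          simp only [h1, Finset.image_empty]
          rw [restr_empty, normSeq_zero_fn hemA hemB2]
        have hTOT2 : (l'.map g').sum = (∑ i : Fin l.length, g' (Fi i)) +
            ∑ k ∈ Mh, g' ({ik k} : Finset ℕ) := by
          rw [hTOT1, Finset.sum_congr rfl (fun i _ => hentm i), Finset.sum_add_distrib]
          congr 1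
          · refine Finset.sum_congr rfl (fun i _ => ?_)
            by_cases h1 : (Mid i).Nonempty
            · rw [if_pos h1]
            · rw [if_neg h1, hFzero i h1]
          · rw [← Finset.sum_filter]
            refine Finset.sum_bij (i := fun i _ => Mi i) ?_ ?_ ?_ ?_
            · intro i hi
              have hf : fresh i := (Finset.mem_filter.mp hi).2
              rw [hMh, Finset.mem_filter]
              exact ⟨hKsub i (hMi_mem i hf.1), ⟨i, hf.1, rfl⟩⟩
            · intro i1 h1 i2 h2 heq
              have hf1 : fresh i1 := (Finset.mem_filter.mp h1).2
              have hf2 : fresh i2 := (Finset.mem_filter.mp h2).2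
              by_contra hne
              rcases lt_or_gt_of_ne hne with h | h
              · exact hf2.2 i1 h ⟨hf1.1, heq⟩
              · exact hf1.2 i2 h ⟨hf2.1, heq.symm⟩
            · intro k hk
              have hMH : MaxHit k := (Finset.mem_filter.mp hk).2
              have hTne : (Finset.univ.filter
                  (fun i : Fin l.length => (Ki i).Nonempty ∧ Mi i = k)).Nonempty := by
                obtain ⟨i, hi1, hi2⟩ := hMH
                exact ⟨i, Finset.mem_filter.mpr ⟨Finset.mem_univ _, hi1, hi2⟩⟩
              set i₀ := (Finset.univ.filter
                  (fun i : Fin l.length => (Ki i).Nonempty ∧ Mi i = k)).min' hTne with hi₀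
              have hi₀mem := Finset.min'_mem _ hTne
              rw [Finset.mem_filter] at hi₀mem
              refine ⟨i₀, Finset.mem_filter.mpr ⟨Finset.mem_univ _, ?_, ?_⟩, hi₀mem.2.2⟩
              · exact hi₀mem.2.1
              · intro i' hi' hcon
                have : i' ∈ Finset.univ.filter
                    (fun i : Fin l.length => (Ki i).Nonempty ∧ Mi i = k) := by
                  rw [Finset.mem_filter]
                  exact ⟨Finset.mem_univ _, hcon.1, by rw [hcon.2, hi₀mem.2.2]⟩
                have := Finset.min'_le _ _ this
                rw [← hi₀] at this
                omega
            · intro i hi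
              rfl
        have hTOT3 : (1/2 : ℝ) * (l'.map g').sum ≤ normSeq 𝒜 ℬ2 (n+1) yS :=
          half_sum_le_normSeq_succ n yS hadm'
        -- combine everything
        have habs' : ∀ k ∈ Mh, |c k| ≤ g' ({ik k} : Finset ℕ) := by
          intro k hk
          rw [hg']
          exact habs_le n S k (hMhsub hk)
        have hfinal1 : ∑ k ∈ Mh, |c k| ≤ ∑ k ∈ Mh, g' ({ik k} : Finset ℕ) :=
          Finset.sum_le_sum habs'
        have hfinal2 : (1/2 : ℝ) * ∑ k ∈ Mh, |c k| * ∑ i : Fin l.length,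
            normSeq 𝒜 ℬ n (restr (l.get i) (x k)) ≤ ∑ k ∈ Mh, |c k| := by
          rw [Finset.mul_sum]
          refine Finset.sum_le_sum (fun k _ => ?_)
          have h1 := hrun k
          have h2 := abs_nonneg (c k)
          have h3 := hrun_nonneg k
          nlinarith
        have hsums : ∑ i : Fin l.length, normSeq 𝒜 ℬ n (restr (l.get i) zS) ≤
            (∑ i : Fin l.length, ∑ k ∈ (Ki i).filter MaxHit,
              |c k| * normSeq 𝒜 ℬ n (restr (l.get i) (x k))) +
            2 * ∑ i : Fin l.length, g' (Fi i) := by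
          rw [Finset.mul_sum]
          rw [← Finset.sum_add_distrib]
          refine Finset.sum_le_sum (fun i _ => ?_)
          have := hper i
          rw [hg']
          linarith
        have hnn2 := normSeq_nonneg (Sadm := ℬ2) hemA (n+1) yS
        rw [hsum1]
        have c1 : (1/2 : ℝ) * ∑ i : Fin l.length, normSeq 𝒜 ℬ n (restr (l.get i) zS) ≤
            (1/2 : ℝ) * ((∑ i : Fin l.length, ∑ k ∈ (Ki i).filter MaxHit,
              |c k| * normSeq 𝒜 ℬ n (restr (l.get i) (x k))) +
              2 * ∑ i : Fin l.length, g' (Fi i)) := by linarith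
        have c2 : (1/2 : ℝ) * (∑ i : Fin l.length, ∑ k ∈ (Ki i).filter MaxHit,
              |c k| * normSeq 𝒜 ℬ n (restr (l.get i) (x k))) ≤
            (1/2 : ℝ) * ∑ k ∈ Mh, |c k| * ∑ i : Fin l.length,
              normSeq 𝒜 ℬ n (restr (l.get i) (x k)) := by linarith [hdouble]
        have c3 := hfinal2
        have c4 := hfinal1
        have c5 : (∑ k ∈ Mh, g' ({ik k} : Finset ℕ)) + ∑ i : Fin l.length, g' (Fi i) =
            (l'.map g').sum := by rw [hTOT2]; ring
        linarith

end Main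

/-- Proposition 3 of the paper: for every `‖·‖_{T̃}`-normalized
block basis `(x₁, …, x_p)` and all scalars `(a_k)`,
`‖∑ a_k x_k‖_{T̃} ≤ 2 ‖∑ a_k e_{i_k}‖_{T̈}` where `i_k = max supp x_k`; moreover the
inequality holds at every finite level `n`. -/
theorem statement3 (seq : Ordinal → ℕ → Ordinal) (hseq : IsCtblLadder seq)
    (a b : Ordinal) (ha : a.card ≤ Cardinal.aleph0) (hb : b.card ≤ Cardinal.aleph0)
    (hb0 : b ≠ 0) (p : ℕ) (x : Fin p → (ℕ →₀ ℝ))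
    (hx0 : ∀ k, x k ≠ 0)
    (hblock : ∀ k l : Fin p, k < l → finLT (x k).support (x l).support)
    (hnorm : ∀ k, tnorm (schreier seq a) (schreier seq b) (x k) = 1)
    (c : Fin p → ℝ) :
    tnorm (schreier seq a) (schreier seq b) (∑ k, c k • x k) ≤
      2 * tnorm (schreier seq a) (sqFam (schreier seq b))
        (∑ k, c k • Finsupp.single ((x k).support.sup id) (1 : ℝ)) ∧
    ∀ n : ℕ, normSeq (schreier seq a) (schreier seq b) n (∑ k, c k • x k) ≤
      2 * normSeq (schreier seq a) (sqFam (schreier seq b)) n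
        (∑ k, c k • Finsupp.single ((x k).support.sup id) (1 : ℝ)) := by
  have hkey := key hseq ha hb x hx0 hblock hnorm c
  constructor
  · refine tnorm_le (fun n => ?_)
    refine le_trans (hkey n Finset.univ) ?_
    have h1 := normSeq_le_tnorm (Sa := schreier seq a) (Sadm := sqFam (schreier seq b)) n
      (∑ k, c k • Finsupp.single ((x k).support.sup id) (1 : ℝ))
    linarith
  · intro n
    exact hkey n Finset.univ

end LTIndex
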